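/- arXiv:1409.6330 — 3 statements merged into one kernel-verified Lean document; each statement's English description precedes it below -/
import Mathlib

section
/- Let A be an integral domain that is a finitely generated k-algebra of Krull dimension 1, is integrally closed in its fraction field Frac(A), satisfies that every unit of A is the image of a nonzero element of k, and is such that Frac(A) is k-algebra isomorphic to the rational function field k(t) in one variable. Then A is k-algebra isomorphic to the polynomial ring k[t] in one variable. -/
open Polynomial
set_option linter.unusedSectionVars false
set_option maxHeartbeats 1000000

noncomputable section
namespace AffineLineAux

variable {k : Type} [Field k] [IsAlgClosed k]

def regAt (a : k) (y : RatFunc k) : Prop := y.denom.eval a ≠ 0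
def regInf (y : RatFunc k) : Prop := y.intDegree ≤ 0

section Classify

variable {W : Type} [CommRing W] [Nontrivial W] [IsLocalRing W]
variable {j : W →+* RatFunc k} {γ : k →+* W}

lemma residue_zero_iff (x : W) :
    IsLocalRing.residue W x = 0 ↔ x ∈ IsLocalRing.maximalIdeal W :=
  Ideal.Quotient.eq_zero_iff_mem

lemma gamma_isUnit (c : k) (hc : c ≠ 0) : IsUnit (γ c) :=
  IsUnit.of_mul_eq_one (γ c⁻¹) (by rw [← map_mul, mul_inv_cancel₀ hc, map_one])

lemma j_eval₂ (hγ : ∀ c, j (γ c) = algebraMap k (RatFunc k) c) (v₀ : W) (P : k[X]) :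
    j (eval₂ γ v₀ P) = aeval (j v₀) P := by
  rw [Polynomial.hom_eval₂, aeval_def]
  congr 1
  exact RingHom.ext hγ

lemma ratio_mem (hj : Function.Injective j) (hγ : ∀ c, j (γ c) = algebraMap k (RatFunc k) c)
    (v₀ : W) (p q : k[X]) (hq : IsUnit (eval₂ γ v₀ q)) (y : RatFunc k)
    (hy : y * aeval (j v₀) q = aeval (j v₀) p) : ∃ v, j v = y := by
  obtain ⟨u, hu⟩ := hq
  have hq0 : aeval (j v₀) q ≠ 0 := by
    intro h0
    have : eval₂ γ v₀ q = 0 := by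
      apply hj; rw [j_eval₂ hγ, h0, map_zero]
    rw [this] at hu
    exact not_isUnit_zero (hu ▸ u.isUnit)
  have h1 : aeval (j v₀) q * j ↑u⁻¹ = 1 := by
    rw [← j_eval₂ hγ (γ := γ) v₀ q, ← hu, ← map_mul, Units.mul_inv, map_one]
  have hinv : j ↑u⁻¹ = (aeval (j v₀) q)⁻¹ := (inv_eq_of_mul_eq_one_right h1).symm
  refine ⟨eval₂ γ v₀ p * ↑u⁻¹, ?_⟩
  rw [map_mul, j_eval₂ hγ, hinv, ← hy]
  field_simp

lemma exists_sub_mem_max (v₀ : W) (P : k[X]) (hP : P ≠ 0)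
    (hPm : eval₂ γ v₀ P ∈ IsLocalRing.maximalIdeal W) :
    ∃ a : k, eval₂ γ v₀ (X - C a) ∈ IsLocalRing.maximalIdeal W := by
  classical
  set ψ : k[X] →+* IsLocalRing.ResidueField W :=
    (IsLocalRing.residue W).comp (eval₂RingHom γ v₀) with hψ
  have hψ_apply : ∀ Q : k[X], ψ Q = IsLocalRing.residue W (eval₂ γ v₀ Q) := fun Q => rfl
  have hψP : ψ P = 0 := by rw [hψ_apply, residue_zero_iff]; exact hPm
  have hsplit := (IsAlgClosed.splits P).eq_prod_roots
  have hlc : ψ (C P.leadingCoeff) ≠ 0 := by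
    have hunit : IsUnit (γ P.leadingCoeff) := gamma_isUnit _ (leadingCoeff_ne_zero.mpr hP)
    intro h0
    rw [hψ_apply, residue_zero_iff, eval₂_C] at h0
    exact (IsLocalRing.notMem_maximalIdeal.mpr hunit) h0
  have hprod : (P.roots.map fun a => ψ (X - C a)).prod = 0 := by
    have h2 := congrArg ψ hsplit
    rw [map_mul, hψP, map_multiset_prod, Multiset.map_map] at h2
    rcases mul_eq_zero.mp h2.symm with h | h
    · exact absurd h hlc
    · simpa using h
  rw [Multiset.prod_eq_zero_iff] at hprod
  obtain ⟨a, _, ha⟩ := Multiset.mem_map.mp hprod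
  refine ⟨a, ?_⟩
  rw [← residue_zero_iff, ← hψ_apply]
  exact ha

lemma isUnit_eval₂ (v₀ : W) {a : k}
    (ha : eval₂ γ v₀ (X - C a) ∈ IsLocalRing.maximalIdeal W)
    (P : k[X]) (hP : P.eval a ≠ 0) : IsUnit (eval₂ γ v₀ P) := by
  rw [← IsLocalRing.notMem_maximalIdeal]
  intro hmem
  have key : (X - C a) * (P /ₘ (X - C a)) + C (P.eval a) = P := by
    conv_rhs => rw [← Polynomial.modByMonic_add_div P (X - C a)]
    rw [Polynomial.modByMonic_X_sub_C_eq_C_eval]; ring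
  have h2 := congrArg (eval₂ γ v₀) key
  rw [eval₂_add, eval₂_mul, eval₂_C] at h2
  have : γ (P.eval a) ∈ IsLocalRing.maximalIdeal W := by
    have h3 : γ (P.eval a) =
        eval₂ γ v₀ P - eval₂ γ v₀ (X - C a) * eval₂ γ v₀ (P /ₘ (X - C a)) := by
      rw [← h2]; ring
    rw [h3]
    exact Ideal.sub_mem _ hmem (Ideal.mul_mem_right _ _ ha)
  exact (IsLocalRing.notMem_maximalIdeal.mpr (gamma_isUnit (γ := γ) _ hP)) this

lemma algMap_poly (p : k[X]) : algebraMap k[X] (RatFunc k) p = aeval RatFunc.X p := by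
  have : (IsScalarTower.toAlgHom k k[X] (RatFunc k)) = (aeval (RatFunc.X : RatFunc k)) := by
    apply Polynomial.algHom_ext; simp
  exact (DFunLike.congr_fun this p)

lemma intDegree_eq (x : RatFunc k) :
    x.intDegree = (x.num.natDegree : ℤ) - x.denom.natDegree := rfl

lemma base_eq (y : RatFunc k) :
    y * algebraMap k[X] (RatFunc k) y.denom = algebraMap k[X] (RatFunc k) y.num := by
  have hd : algebraMap k[X] (RatFunc k) y.denom ≠ 0 :=
    RatFunc.algebraMap_ne_zero y.denom_ne_zero
  have h := (div_eq_iff hd).mp (RatFunc.num_div_denom y)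
  rw [← h]

-- inverse in range via injectivity
lemma inv_of_unit_mem (hj : Function.Injective j) {v w : W} {y : RatFunc k}
    (hy0 : y ≠ 0) (hv : j v = y) (hw : j w = y⁻¹)
    (hwm : w ∈ IsLocalRing.maximalIdeal W) : False := by
  have h1 : v * w = 1 := by
    apply hj
    rw [map_mul, hv, hw, map_one, mul_inv_cancel₀ hy0]
  have hunit : IsUnit w := IsUnit.of_mul_eq_one v (by rw [mul_comm]; exact h1)
  exact (IsLocalRing.notMem_maximalIdeal.mpr hunit) hwm

lemma reflect_ratio {v₀ : W} (hv₀ : j v₀ = (RatFunc.X : RatFunc k)⁻¹) (y : RatFunc k) (n : ℕ)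
    (h1 : y.num.natDegree ≤ n) (h2 : y.denom.natDegree ≤ n) :
    y * aeval (j v₀) (reflect n y.denom) = aeval (j v₀) (reflect n y.num) := by
  have hXne : (RatFunc.X : RatFunc k) ≠ 0 := RatFunc.X_ne_zero
  have hXn : (RatFunc.X : RatFunc k) ^ n ≠ 0 := pow_ne_zero _ hXne
  letI : Invertible (RatFunc.X : RatFunc k) := invertibleOfNonzero hXne
  have e1 : aeval (j v₀) (reflect n y.num) * RatFunc.X ^ n = algebraMap k[X] (RatFunc k) y.num := by
    rw [hv₀]
    have := Polynomial.eval₂_reflect_mul_pow (algebraMap k (RatFunc k)) RatFunc.X n y.num h1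
    rw [invOf_eq_inv] at this
    rw [algMap_poly, aeval_def, aeval_def]
    exact this
  have e2 : aeval (j v₀) (reflect n y.denom) * RatFunc.X ^ n
      = algebraMap k[X] (RatFunc k) y.denom := by
    rw [hv₀]
    have := Polynomial.eval₂_reflect_mul_pow (algebraMap k (RatFunc k)) RatFunc.X n y.denom h2
    rw [invOf_eq_inv] at this
    rw [algMap_poly, aeval_def, aeval_def]
    exact this
  have base := base_eq y
  have : y * (aeval (j v₀) (reflect n y.denom) * RatFunc.X ^ n)
      = aeval (j v₀) (reflect n y.num) * RatFunc.X ^ n := by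
    rw [e1, e2, base]
  field_simp at this
  rcases mul_eq_mul_right_iff.mp (by linear_combination RatFunc.X ^ n * this : (y * aeval (j v₀) (reflect n y.denom)) * RatFunc.X ^ n = aeval (j v₀) (reflect n y.num) * RatFunc.X ^ n) with h | h
  · exact h
  · exact absurd h hXn

lemma classify (hj : Function.Injective j) (hγ : ∀ c, j (γ c) = algebraMap k (RatFunc k) c)
    (hval : ∀ y : RatFunc k, (∃ v, j v = y) ∨ (∃ v, j v = y⁻¹))
    (hne : ∃ z : RatFunc k, ¬ ∃ v, j v = z) :
    (∃ a : k, ∀ y : RatFunc k, (∃ v, j v = y) ↔ regAt a y) ∨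
      (∀ y : RatFunc k, (∃ v, j v = y) ↔ regInf y) := by
  obtain ⟨z₀, hz₀⟩ := hne
  by_cases hX : ∃ v : W, j v = RatFunc.X
  · -- finite place case
    obtain ⟨v₀, hv₀⟩ := hX
    have hA : ∀ p : k[X], aeval (j v₀) p = algebraMap k[X] (RatFunc k) p := by
      intro p; rw [hv₀, ← algMap_poly]
    have hstep : ∃ P : k[X], P ≠ 0 ∧ eval₂ γ v₀ P ∈ IsLocalRing.maximalIdeal W := by
      by_contra hcon
      push_neg at hcon
      apply hz₀
      refine ratio_mem hj hγ v₀ z₀.num z₀.denom ?_ z₀ ?_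
      · exact IsLocalRing.notMem_maximalIdeal.mp (hcon _ z₀.denom_ne_zero)
      · rw [hA, hA]; exact base_eq z₀
    obtain ⟨P, hP0, hPm⟩ := hstep
    obtain ⟨a, ha⟩ := exists_sub_mem_max v₀ P hP0 hPm
    refine Or.inl ⟨a, fun y => ⟨?_, ?_⟩⟩
    · rintro ⟨v, rfl⟩
      intro hden
      have hy0 : j v ≠ 0 := by
        intro h0
        rw [h0] at hden
        simp [RatFunc.denom_zero] at hden
      have hnum : (j v).num.eval a ≠ 0 := by
        intro hnum0
        have hco := (RatFunc.isCoprime_num_denom (j v)).map (evalRingHom a)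
        simp only [coe_evalRingHom] at hco
        rw [hnum0, hden] at hco
        exact not_isCoprime_zero_zero hco
      obtain ⟨u, hu⟩ := isUnit_eval₂ v₀ ha _ hnum
      obtain ⟨E, hE⟩ : (X - C a) ∣ (j v).denom := dvd_iff_isRoot.mpr hden
      have hjui : j ↑u⁻¹ = (algebraMap k[X] (RatFunc k) (j v).num)⁻¹ := by
        have h1 : algebraMap k[X] (RatFunc k) (j v).num * j ↑u⁻¹ = 1 := by
          rw [← hA, ← j_eval₂ hγ (γ := γ) v₀, ← hu, ← map_mul, Units.mul_inv, map_one]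
        exact (inv_eq_of_mul_eq_one_right h1).symm
      set w : W := eval₂ γ v₀ (X - C a) * eval₂ γ v₀ E * ↑u⁻¹ with hwdef
      refine inv_of_unit_mem hj hy0 rfl (v := v) (w := w) ?_ ?_
      · rw [map_mul, map_mul, j_eval₂ hγ, j_eval₂ hγ, hjui, hA, hA, ← map_mul, ← hE]
        have hnum0 : algebraMap k[X] (RatFunc k) (j v).num ≠ 0 :=
          RatFunc.algebraMap_ne_zero (RatFunc.num_ne_zero hy0)
        have hden0 : algebraMap k[X] (RatFunc k) (j v).denom ≠ 0 :=
          RatFunc.algebraMap_ne_zero (j v).denom_ne_zero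
        have h' : j v * (algebraMap k[X] (RatFunc k) (j v).denom *
            ((algebraMap k[X] (RatFunc k)) (j v).num)⁻¹) = 1 := by
          rw [← mul_assoc, base_eq (j v), mul_inv_cancel₀ hnum0]
        exact (inv_eq_of_mul_eq_one_right h').symm
      · exact Ideal.mul_mem_right _ _ (Ideal.mul_mem_right _ _ ha)
    · intro hreg
      refine ratio_mem hj hγ v₀ y.num y.denom (isUnit_eval₂ v₀ ha _ hreg) y ?_
      rw [hA, hA]; exact base_eq y
  · -- infinite place case
    obtain ⟨v₀, hv₀⟩ := (hval RatFunc.X).resolve_left hX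
    have hXne : (RatFunc.X : RatFunc k) ≠ 0 := RatFunc.X_ne_zero
    have hstep : ∃ P : k[X], P ≠ 0 ∧ eval₂ γ v₀ P ∈ IsLocalRing.maximalIdeal W := by
      by_contra hcon
      push_neg at hcon
      apply hz₀
      set n := max z₀.num.natDegree z₀.denom.natDegree with hn
      refine ratio_mem hj hγ v₀ (reflect n z₀.num) (reflect n z₀.denom) ?_ z₀ ?_
      · refine IsLocalRing.notMem_maximalIdeal.mp (hcon _ ?_)
        rw [Ne, reflect_eq_zero_iff]
        exact z₀.denom_ne_zero
      · exact reflect_ratio hv₀ z₀ n (le_max_left _ _) (le_max_right _ _)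
    obtain ⟨P, hP0, hPm⟩ := hstep
    obtain ⟨a, ha⟩ := exists_sub_mem_max v₀ P hP0 hPm
    have hv₀m : v₀ ∈ IsLocalRing.maximalIdeal W := by
      rcases eq_or_ne a 0 with rfl | hane
      · simpa using ha
      · exfalso
        have h1 : eval₂ γ v₀ (X - C a) = v₀ - γ a := by simp
        rw [h1] at ha
        have hvu : IsUnit v₀ := by
          by_contra hv
          have hvm : v₀ ∈ IsLocalRing.maximalIdeal W := by
            rwa [← IsLocalRing.notMem_maximalIdeal, not_not] at hv
          have : γ a ∈ IsLocalRing.maximalIdeal W := by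
            have := Ideal.sub_mem _ hvm ha
            simpa using this
          exact (IsLocalRing.notMem_maximalIdeal.mpr (gamma_isUnit a hane)) this
        obtain ⟨u, hu⟩ := hvu
        refine hX ⟨↑u⁻¹, ?_⟩
        have h2 : (RatFunc.X : RatFunc k)⁻¹ * j ↑u⁻¹ = 1 := by
          rw [← hv₀, ← hu, ← map_mul, Units.mul_inv, map_one]
        have := (inv_eq_of_mul_eq_one_right h2).symm
        rwa [inv_inv] at this
    have ha' : eval₂ γ v₀ (X - C (0 : k)) ∈ IsLocalRing.maximalIdeal W := by
      have h1 : eval₂ γ v₀ (X - C (0 : k)) = v₀ := by simp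
      rwa [h1]
    have hmem : ∀ y : RatFunc k, regInf y → ∃ v, j v = y := by
      intro y hy
      rcases eq_or_ne y 0 with rfl | hy0
      · exact ⟨0, map_zero j⟩
      have hnum_le : y.num.natDegree ≤ y.denom.natDegree := by
        rw [regInf, intDegree_eq] at hy; omega
      refine ratio_mem hj hγ v₀ (reflect y.denom.natDegree y.num)
        (reflect y.denom.natDegree y.denom) ?_ y ?_
      · refine isUnit_eval₂ v₀ ha' _ ?_
        rw [← coeff_zero_eq_eval_zero, coeff_reflect, revAt_le (Nat.zero_le _), Nat.sub_zero]
        exact leadingCoeff_ne_zero.mpr y.denom_ne_zero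
      · exact reflect_ratio hv₀ y _ hnum_le le_rfl
    refine Or.inr fun y => ⟨?_, hmem y⟩
    rintro ⟨v, rfl⟩
    by_contra hreg
    rw [regInf, not_le] at hreg
    have hy0 : j v ≠ 0 := by
      intro h0; rw [h0] at hreg; simp [RatFunc.intDegree_zero] at hreg
    have hiv : (j v)⁻¹.intDegree = -(j v).intDegree := by
      have := RatFunc.intDegree_mul hy0 (inv_ne_zero hy0)
      rw [mul_inv_cancel₀ hy0, RatFunc.intDegree_one] at this
      omega
    have hz : (RatFunc.X * (j v)⁻¹).intDegree ≤ 0 := by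
      rw [RatFunc.intDegree_mul hXne (inv_ne_zero hy0), RatFunc.intDegree_X, hiv]
      omega
    obtain ⟨w, hw⟩ := hmem _ hz
    refine inv_of_unit_mem hj hy0 rfl (v := v) (w := v₀ * w) ?_ ?_
    · rw [map_mul, hv₀, hw, ← mul_assoc, inv_mul_cancel₀ hXne, one_mul]
    · exact Ideal.mul_mem_right _ _ hv₀m

end Classify

lemma transcendental_X : Transcendental k (RatFunc.X : RatFunc k) := by
  rw [transcendental_iff_injective]
  have : (aeval (RatFunc.X : RatFunc k) : k[X] →ₐ[k] RatFunc k) = IsScalarTower.toAlgHom k k[X] (RatFunc k) := by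
    apply Polynomial.algHom_ext; simp
  rw [this]
  exact IsFractionRing.injective _ _

lemma regAt_div (a : k) (p q : k[X]) (hq : q.eval a ≠ 0) :
    regAt a (algebraMap k[X] (RatFunc k) p / algebraMap k[X] (RatFunc k) q) := by
  intro h0
  obtain ⟨e, he⟩ := RatFunc.denom_div_dvd p q
  rw [he] at hq
  simp only [eval_mul, h0, zero_mul, ne_eq, not_true_eq_false] at hq

lemma intDegree_div (p q : k[X]) (hp : p ≠ 0) (hq : q ≠ 0) :
    (algebraMap k[X] (RatFunc k) p / algebraMap k[X] (RatFunc k) q).intDegree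
      = (p.natDegree : ℤ) - q.natDegree := by
  have hp' : algebraMap k[X] (RatFunc k) p ≠ 0 := by
    simpa using (RatFunc.algebraMap_ne_zero hp)
  have hq' : algebraMap k[X] (RatFunc k) q ≠ 0 := by
    simpa using (RatFunc.algebraMap_ne_zero hq)
  have hx : algebraMap k[X] (RatFunc k) p / algebraMap k[X] (RatFunc k) q ≠ 0 :=
    div_ne_zero hp' hq'
  have := RatFunc.intDegree_mul hx hq'
  rw [div_mul_cancel₀ _ hq'] at this
  rw [RatFunc.intDegree_polynomial, RatFunc.intDegree_polynomial] at this
  omega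

lemma aeval_inv_reflect (w : RatFunc k) (hw : w ≠ 0) (P : k[X]) (n : ℕ) (h : P.natDegree ≤ n) :
    aeval w⁻¹ (reflect n P) * w ^ n = aeval w P := by
  letI : Invertible w := invertibleOfNonzero hw
  have := Polynomial.eval₂_reflect_mul_pow (algebraMap k (RatFunc k)) w n P h
  rw [invOf_eq_inv] at this
  simpa [Polynomial.aeval_def] using this


lemma dimLEOne (A : Type) [CommRing A] [IsDomain A] (hdim : ringKrullDim A ≤ 1) : Ring.DimensionLEOne A := by
  constructor
  intro p hp hpp
  by_contra hnm
  obtain ⟨M, hM, hpM⟩ := Ideal.exists_le_maximal p hpp.ne_top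
  have hlt : p < M := lt_of_le_of_ne hpM (by rintro rfl; exact hnm hM)
  let c : LTSeries (PrimeSpectrum A) :=
    (RelSeries.singleton _ (⟨⊥, Ideal.bot_prime⟩ : PrimeSpectrum A)).snoc ⟨p, hpp⟩
      (by exact lt_of_le_of_ne bot_le (by simpa [PrimeSpectrum.ext_iff] using Ne.symm hp))
  let c2 : LTSeries (PrimeSpectrum A) := c.snoc ⟨M, hM.isPrime⟩ (by
    change c.last < _
    have : c.last = ⟨p, hpp⟩ := RelSeries.last_snoc _ _ _
    rw [this]; exact hlt)
  have := Order.LTSeries.length_le_krullDim c2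
  rw [show ringKrullDim A = Order.krullDim (PrimeSpectrum A) from rfl] at hdim
  have h2 : c2.length = 2 := rfl
  rw [h2] at this
  have := le_trans this hdim
  norm_num at this



section MemRange

variable {A : Type} [CommRing A] [IsDomain A] [IsDedekindDomain A]
variable [Algebra k A] [Algebra A (RatFunc k)] [IsFractionRing A (RatFunc k)]
variable [IsScalarTower k A (RatFunc k)]

lemma mem_range_of_regular (x : RatFunc k)
    (hfin : ∀ a : k, (∀ b : A, regAt a (algebraMap A (RatFunc k) b)) → regAt a x)
    (hinf : (∀ b : A, regInf (algebraMap A (RatFunc k) b)) → regInf x) :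
    ∃ b : A, algebraMap A (RatFunc k) b = x := by
  by_contra hx
  push_neg at hx
  -- the ideal of denominators of x
  let I : Ideal A :=
    { carrier := {b : A | ∃ c : A, algebraMap A (RatFunc k) b * x = algebraMap A (RatFunc k) c}
      add_mem' := by
        rintro b₁ b₂ ⟨c₁, h₁⟩ ⟨c₂, h₂⟩
        exact ⟨c₁ + c₂, by rw [map_add, map_add, add_mul, h₁, h₂]⟩
      zero_mem' := ⟨0, by simp⟩
      smul_mem' := by
        rintro r b ⟨c, hc⟩
        exact ⟨r * c, by rw [smul_eq_mul, map_mul, map_mul, mul_assoc, hc]⟩ }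
  have hmemI : ∀ b : A, b ∈ I ↔
      ∃ c : A, algebraMap A (RatFunc k) b * x = algebraMap A (RatFunc k) c := fun b => Iff.rfl
  -- I is proper
  have hItop : I ≠ ⊤ := by
    intro htop
    have h1 : (1 : A) ∈ I := htop ▸ Submodule.mem_top
    obtain ⟨c, hc⟩ := (hmemI 1).mp h1
    rw [map_one, one_mul] at hc
    exact hx c hc.symm
  obtain ⟨m, hm, hIm⟩ := Ideal.exists_le_maximal I hItop
  -- I contains a nonzero element
  obtain ⟨b₀, s₀, hs₀, hdiv⟩ := IsFractionRing.div_surjective (A := A) x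
  have hs₀0 : s₀ ≠ 0 := nonZeroDivisors.ne_zero hs₀
  have hs₀I : s₀ ∈ I := by
    refine (hmemI s₀).mpr ⟨b₀, ?_⟩
    have halg : algebraMap A (RatFunc k) s₀ ≠ 0 := by
      rw [Ne, IsFractionRing.to_map_eq_zero_iff]
      exact hs₀0
    rw [mul_comm, ← hdiv, div_mul_cancel₀ _ halg]
  have hmbot : m ≠ ⊥ := by
    intro hbot
    rw [hbot] at hIm
    exact hs₀0 (by simpa using hIm hs₀I)
  -- the localization at m
  letI W := Localization.AtPrime m
  haveI : IsDiscreteValuationRing W :=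
    IsLocalization.AtPrime.isDiscreteValuationRing_of_dedekind_domain A hmbot W
  have hu : ∀ y : m.primeCompl, IsUnit (algebraMap A (RatFunc k) y) := by
    rintro ⟨s, hs⟩
    have hs0 : s ≠ 0 := fun h => hs (h ▸ m.zero_mem)
    rw [isUnit_iff_ne_zero]
    rw [Ne, IsFractionRing.to_map_eq_zero_iff]
    exact hs0
  let j : W →+* RatFunc k := IsLocalization.lift hu
  have hcompat : ∀ b : A, j (algebraMap A W b) = algebraMap A (RatFunc k) b := fun b =>
    IsLocalization.lift_eq hu b
  have hAinj : Function.Injective (algebraMap A (RatFunc k)) := IsFractionRing.injective A _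
  have hWinj : Function.Injective (algebraMap A W) :=
    IsLocalization.injective W m.primeCompl_le_nonZeroDivisors
  have hj : Function.Injective j := by
    rw [IsLocalization.lift_injective_iff]
    intro a b
    constructor
    · intro h; exact congrArg _ (hWinj h)
    · intro h; exact congrArg _ (hAinj h)
  let γ : k →+* W := (algebraMap A W).comp (algebraMap k A)
  have hγ : ∀ c : k, j (γ c) = algebraMap k (RatFunc k) c := by
    intro c
    show j (algebraMap A W (algebraMap k A c)) = _
    rw [hcompat, ← IsScalarTower.algebraMap_apply]
  have hval : ∀ y : RatFunc k, (∃ v, j v = y) ∨ (∃ v, j v = y⁻¹) := by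
    intro y
    rcases eq_or_ne y 0 with rfl | hy0
    · exact Or.inl ⟨0, map_zero j⟩
    obtain ⟨b, s, hs, hbs⟩ := IsFractionRing.div_surjective (A := A) y
    have hsA : algebraMap A (RatFunc k) s ≠ 0 := by
      rw [Ne, IsFractionRing.to_map_eq_zero_iff]; exact nonZeroDivisors.ne_zero hs
    have hb0 : b ≠ 0 := by
      intro h; rw [h] at hbs; simp at hbs; exact hy0 hbs.symm
    have hbA : algebraMap A (RatFunc k) b ≠ 0 := by
      rw [Ne, IsFractionRing.to_map_eq_zero_iff]; exact hb0
    obtain ⟨c, hc | hc⟩ := ValuationRing.cond (algebraMap A W b) (algebraMap A W s)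
    · right
      refine ⟨c, ?_⟩
      have := congrArg j hc
      rw [map_mul, hcompat, hcompat] at this
      rw [← hbs, inv_div, eq_div_iff hbA, mul_comm]
      exact this
    · left
      refine ⟨c, ?_⟩
      have := congrArg j hc
      rw [map_mul, hcompat, hcompat] at this
      rw [← hbs, eq_div_iff hsA, mul_comm]
      exact this
  have hnotx : ¬ ∃ v, j v = x := by
    rintro ⟨w, hw⟩
    obtain ⟨⟨b, s⟩, hbs⟩ := IsLocalization.surj m.primeCompl w
    have := congrArg j hbs
    rw [map_mul, hcompat, hcompat, hw] at this
    have hsI : (s : A) ∈ I := (hmemI s).mpr ⟨b, by rw [mul_comm, this]⟩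
    exact s.2 (hIm hsI)
  have hne : ∃ z : RatFunc k, ¬ ∃ v, j v = z := ⟨x, hnotx⟩
  rcases classify hj hγ hval hne with ⟨a, hiff⟩ | hiff
  · have hgood : ∀ b : A, regAt a (algebraMap A (RatFunc k) b) := by
      intro b
      exact (hiff _).mp ⟨algebraMap A W b, hcompat b⟩
    exact hnotx ((hiff x).mpr (hfin a hgood))
  · have hgood : ∀ b : A, regInf (algebraMap A (RatFunc k) b) := by
      intro b
      exact (hiff _).mp ⟨algebraMap A W b, hcompat b⟩
    exact hnotx ((hiff x).mpr (hinf hgood))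

end MemRange


section Main

lemma hCmap (c : k) : algebraMap k[X] (RatFunc k) (C c) = algebraMap k (RatFunc k) c := by
  rw [← Polynomial.algebraMap_eq, ← IsScalarTower.algebraMap_apply]

lemma denom_eq_one_of {y : RatFunc k} (h : ∀ a : k, y.denom.eval a ≠ 0) : y.denom = 1 := by
  by_contra hne1
  have hdeg : y.denom.natDegree ≠ 0 := fun h0 =>
    hne1 ((Polynomial.Monic.natDegree_eq_zero (RatFunc.monic_denom y)).mp h0)
  obtain ⟨r, hr⟩ := IsAlgClosed.exists_root (p := y.denom)
    (fun hd0 => hdeg (natDegree_eq_zero_iff_degree_le_zero.mpr (le_of_eq hd0)))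
  exact h r hr

end Main

end AffineLineAux

open AffineLineAux in
/-- A smooth (normal) rational affine curve over an algebraically closed field `k` of
characteristic zero whose coordinate ring has only constant units is the affine line:
if `A` is a finitely generated integral `k`-domain of Krull dimension `1`, integrally
closed in its fraction field, with only constant units, and with fraction field
`k`-isomorphic to `k(t)`, then `A` is `k`-isomorphic to the polynomial ring `k[t]`. -/
theorem normal_rational_affine_curve_with_constant_units_is_affine_line
    (k A : Type) [Field k] [IsAlgClosed k] [CharZero k]
    [CommRing A] [IsDomain A] [Algebra k A] [Algebra.FiniteType k A]
    [IsIntegrallyClosed A]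
    (hdim : ringKrullDim A = 1)
    (hunits : ∀ u : Aˣ, ∃ c : k, c ≠ 0 ∧ algebraMap k A c = ↑u)
    (hrat : Nonempty (FractionRing A ≃ₐ[k] FractionRing (Polynomial k))) :
    Nonempty (A ≃ₐ[k] Polynomial k) := by
  classical
  obtain ⟨φ⟩ := hrat
  -- identify the fraction field with the rational function field
  let e0 : FractionRing (Polynomial k) ≃ₐ[Polynomial k] RatFunc k :=
    FractionRing.algEquiv (Polynomial k) (RatFunc k)
  let e1 : FractionRing (Polynomial k) ≃ₐ[k] RatFunc k := e0.restrictScalars k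
  let ψ : FractionRing A ≃ₐ[k] RatFunc k := φ.trans e1
  let f : A →+* RatFunc k :=
    (ψ.toAlgHom.toRingHom).comp (algebraMap A (FractionRing A))
  letI : Algebra A (RatFunc k) := f.toAlgebra
  haveI htower : IsScalarTower k A (RatFunc k) := IsScalarTower.of_algebraMap_eq (fun c => by
    show algebraMap k (RatFunc k) c = f (algebraMap k A c)
    show _ = ψ (algebraMap A (FractionRing A) (algebraMap k A c))
    rw [← IsScalarTower.algebraMap_apply, ψ.commutes])
  let ψ' : FractionRing A ≃ₐ[A] RatFunc k :=
    { ψ.toRingEquiv with commutes' := fun a => rfl }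
  haveI : IsFractionRing A (RatFunc k) :=
    IsLocalization.isLocalization_of_algEquiv (nonZeroDivisors A) ψ'
  haveI : IsNoetherianRing A := Algebra.FiniteType.isNoetherianRing k A
  haveI : Ring.DimensionLEOne A := dimLEOne A (le_of_eq hdim)
  haveI : IsDedekindRing A := ⟨⟩
  have hAinj : Function.Injective (algebraMap A (RatFunc k)) :=
    IsFractionRing.injective A (RatFunc k)
  have hpinj : Function.Injective (algebraMap k[X] (RatFunc k)) :=
    IsFractionRing.injective k[X] (RatFunc k)
  -- units of A are constants
  have funits : ∀ y : RatFunc k, y ≠ 0 → (∃ b : A, algebraMap A (RatFunc k) b = y) →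
      (∃ b' : A, algebraMap A (RatFunc k) b' = y⁻¹) →
      ∃ c : k, y = algebraMap k (RatFunc k) c := by
    rintro y hy0 ⟨b, rfl⟩ ⟨b', hb'⟩
    have h1 : b * b' = 1 := by
      apply hAinj
      rw [map_mul, map_one, hb', mul_inv_cancel₀ hy0]
    obtain ⟨c, hc0, hc⟩ := hunits (Units.mkOfMulEqOne b b' h1)
    rw [Units.val_mkOfMulEqOne] at hc
    exact ⟨c, by rw [← hc, ← IsScalarTower.algebraMap_apply]⟩
  -- good places
  set GA : k → Prop := fun a => ∀ b : A, regAt a (algebraMap A (RatFunc k) b) with hGA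
  set GI : Prop := (∀ b : A, regInf (algebraMap A (RatFunc k) b)) with hGIdef
  -- two distinct bad finite places are impossible
  have two_fin : ∀ a b : k, a ≠ b → ¬ GA a → ¬ GA b → False := by
    intro a b hab hga hgb
    have hXa : (X - C a : k[X]) ≠ 0 := X_sub_C_ne_zero a
    have hXb : (X - C b : k[X]) ≠ 0 := X_sub_C_ne_zero b
    set u : RatFunc k :=
      algebraMap k[X] (RatFunc k) (X - C a) / algebraMap k[X] (RatFunc k) (X - C b) with hu_def
    have hu : ∃ bb : A, algebraMap A (RatFunc k) bb = u := by
      apply mem_range_of_regular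
      · intro c hc
        have hcb : c ≠ b := fun h => hgb (h ▸ hc)
        exact regAt_div c _ _ (by simpa using sub_ne_zero.mpr hcb)
      · intro _
        rw [regInf, hu_def, intDegree_div _ _ hXa hXb]
        simp [natDegree_X_sub_C]
    have huinv : ∃ bb : A, algebraMap A (RatFunc k) bb = u⁻¹ := by
      rw [hu_def, inv_div]
      apply mem_range_of_regular
      · intro c hc
        have hca : c ≠ a := fun h => hga (h ▸ hc)
        exact regAt_div c _ _ (by simpa using sub_ne_zero.mpr hca)
      · intro _
        rw [regInf, intDegree_div _ _ hXb hXa]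
        simp [natDegree_X_sub_C]
    have hu0 : u ≠ 0 :=
      div_ne_zero (RatFunc.algebraMap_ne_zero hXa) (RatFunc.algebraMap_ne_zero hXb)
    obtain ⟨c, hc⟩ := funits u hu0 hu huinv
    rw [hu_def, div_eq_iff (RatFunc.algebraMap_ne_zero hXb), ← hCmap, ← map_mul] at hc
    have h2 := congrArg (eval b) (hpinj hc)
    simp at h2
    exact hab (sub_eq_zero.mp h2).symm
  -- a bad finite place together with a bad infinite place is impossible
  have fin_inf : ∀ a : k, ¬ GA a → ¬ GI → False := by
    intro a hga hgi
    have hXa : (X - C a : k[X]) ≠ 0 := X_sub_C_ne_zero a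
    set u : RatFunc k := algebraMap k[X] (RatFunc k) (X - C a) with hu_def
    have hu : ∃ bb : A, algebraMap A (RatFunc k) bb = u := by
      apply mem_range_of_regular
      · intro c _
        rw [hu_def]
        show ((algebraMap k[X] (RatFunc k)) (X - C a)).denom.eval c ≠ 0
        rw [RatFunc.denom_algebraMap]
        simp
      · intro h; exact absurd h hgi
    have huinv : ∃ bb : A, algebraMap A (RatFunc k) bb = u⁻¹ := by
      have : u⁻¹ = algebraMap k[X] (RatFunc k) 1 / algebraMap k[X] (RatFunc k) (X - C a) := by
        rw [map_one, one_div]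
      rw [this]
      apply mem_range_of_regular
      · intro c hc
        have hca : c ≠ a := fun h => hga (h ▸ hc)
        exact regAt_div c _ _ (by simpa using sub_ne_zero.mpr hca)
      · intro _
        rw [regInf, intDegree_div _ _ one_ne_zero hXa]
        simp [natDegree_X_sub_C]
    have hu0 : u ≠ 0 := RatFunc.algebraMap_ne_zero hXa
    obtain ⟨c, hc⟩ := funits u hu0 hu huinv
    rw [hu_def, ← hCmap] at hc
    have h2 := hpinj hc
    have h3 := congrArg (eval a) h2
    have h4 := congrArg (eval (a + 1)) h2
    simp at h3 h4
    rw [← h3] at h4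
    exact one_ne_zero h4
  -- the generic build
  have build : ∀ g : RatFunc k, (∃ b : A, algebraMap A (RatFunc k) b = g) →
      (∀ b : A, ∃ P : k[X], aeval g P = algebraMap A (RatFunc k) b) →
      Transcendental k g → Nonempty (A ≃ₐ[k] Polynomial k) := by
    rintro g ⟨b₀, hb₀⟩ hsub htr
    let F : A →ₐ[k] RatFunc k := IsScalarTower.toAlgHom k A (RatFunc k)
    have hFinj : Function.Injective F := hAinj
    have hrange : F.range = (aeval g : k[X] →ₐ[k] RatFunc k).range := by
      apply le_antisymm
      · rintro x hx
        obtain ⟨b, hb⟩ := hx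
        obtain ⟨P, hP⟩ := hsub b
        exact ⟨P, by show aeval g P = x; rw [hP, ← hb]; rfl⟩
      · rw [← Algebra.adjoin_singleton_eq_range_aeval]
        apply Algebra.adjoin_le
        intro x hx
        rw [Set.mem_singleton_iff] at hx
        subst hx
        exact ⟨b₀, hb₀⟩
    exact ⟨(AlgEquiv.ofInjective F hFinj).trans ((Subalgebra.equivOfEq _ _ hrange).trans
      (AlgEquiv.ofInjective (aeval g) (transcendental_iff_injective.mp htr)).symm)⟩
  by_cases hGI : GI
  · by_cases hall : ∀ a, GA a
    · -- impossible : A would consist of constants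
      exfalso
      have hconst : ∀ b : A, ∃ c : k, algebraMap A (RatFunc k) b = algebraMap k (RatFunc k) c := by
        intro b
        set y := algebraMap A (RatFunc k) b with hy
        have hd1 : y.denom = 1 := denom_eq_one_of (fun a => hall a b)
        have hnum : y.num.natDegree = 0 := by
          have h := hGI b
          rw [← hy] at h
          rw [regInf, intDegree_eq, hd1] at h
          simpa using h
        obtain ⟨c, hc⟩ := natDegree_eq_zero.mp hnum
        refine ⟨c, ?_⟩
        conv_lhs => rw [← RatFunc.num_div_denom y]
        rw [hd1, map_one, div_one, ← hc, hCmap]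
      obtain ⟨bX, sX, hsX, hX⟩ := IsFractionRing.div_surjective (A := A) (RatFunc.X : RatFunc k)
      obtain ⟨c1, hc1⟩ := hconst bX
      obtain ⟨c2, hc2⟩ := hconst sX
      have hsX0 : algebraMap A (RatFunc k) sX ≠ 0 := by
        rw [Ne, IsFractionRing.to_map_eq_zero_iff]
        exact nonZeroDivisors.ne_zero hsX
      have hXconst : (RatFunc.X : RatFunc k) = algebraMap k (RatFunc k) (c1 / c2) := by
        rw [← hX, hc1, hc2, map_div₀]
      exact transcendental_X (hXconst ▸ isAlgebraic_algebraMap (c1 / c2))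
    · -- exactly one bad finite place a₀
      push_neg at hall
      obtain ⟨a₀, ha₀⟩ := hall
      have hother : ∀ c, c ≠ a₀ → GA c := by
        intro c hc
        by_contra hgc
        exact two_fin c a₀ hc hgc ha₀
      set w : RatFunc k := algebraMap k[X] (RatFunc k) (X - C a₀) with hw_def
      have hw0 : w ≠ 0 := RatFunc.algebraMap_ne_zero (X_sub_C_ne_zero a₀)
      set g : RatFunc k := w⁻¹ with hg_def
      have hgdiv : g = algebraMap k[X] (RatFunc k) 1 / algebraMap k[X] (RatFunc k) (X - C a₀) := by
        rw [map_one, one_div]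
      have hg : ∃ b : A, algebraMap A (RatFunc k) b = g := by
        apply mem_range_of_regular
        · intro c hc
          have hca : c ≠ a₀ := fun h => ha₀ (h ▸ hc)
          rw [hgdiv]
          exact regAt_div c _ _ (by simpa using sub_ne_zero.mpr hca)
        · intro _
          rw [hgdiv, regInf, intDegree_div _ _ one_ne_zero (X_sub_C_ne_zero a₀)]
          simp [natDegree_X_sub_C]
      have hsub : ∀ b : A, ∃ P : k[X], aeval g P = algebraMap A (RatFunc k) b := by
        intro b
        set y := algebraMap A (RatFunc k) b with hy
        have hdpow : y.denom = (X - C a₀) ^ y.denom.natDegree := by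
          have hsp : Splits y.denom := IsAlgClosed.splits _
          have hprod := hsp.eq_prod_roots_of_monic (RatFunc.monic_denom y)
          have hroots : y.denom.roots = Multiset.replicate y.denom.natDegree a₀ := by
            rw [Multiset.eq_replicate]
            refine ⟨splits_iff_card_roots.mp hsp, ?_⟩
            intro r hr
            by_contra hra
            exact (hother r hra b) (isRoot_of_mem_roots hr)
          rw [hroots] at hprod
          simpa [Multiset.map_replicate, Multiset.prod_replicate] using hprod
        have hnumle : y.num.natDegree ≤ y.denom.natDegree := by
          have h := hGI b
          rw [← hy] at h
          rw [regInf, intDegree_eq] at h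
          omega
        set e := y.denom.natDegree with he
        set N := y.num.comp (Polynomial.X + C a₀) with hN
        have hNdeg : N.natDegree ≤ e := by
          rw [hN, natDegree_comp, natDegree_X_add_C, mul_one]
          exact hnumle
        have hNcomp : N.comp (Polynomial.X - C a₀) = y.num := by
          rw [hN, Polynomial.comp_assoc]
          have : (Polynomial.X + C a₀).comp (Polynomial.X - C a₀) = (Polynomial.X : k[X]) := by
            simp [add_comp]
          rw [this, comp_X]
        have haevalnum : aeval w N = algebraMap k[X] (RatFunc k) y.num := by
          have h5 : aeval w (Polynomial.X + C a₀) = (RatFunc.X : RatFunc k) := by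
            rw [map_add, aeval_X, aeval_C, hw_def, map_sub, RatFunc.algebraMap_X, hCmap]
            ring
          rw [hN, aeval_comp, h5, ← algMap_poly]
        refine ⟨reflect e N, ?_⟩
        have h3 := aeval_inv_reflect (k := k) w hw0 N e hNdeg
        have h4 : w ^ e = algebraMap k[X] (RatFunc k) y.denom := by
          rw [hw_def, ← map_pow, ← hdpow]
        calc aeval g (reflect e N) = aeval w N / w ^ e := by
              rw [eq_div_iff (pow_ne_zero e hw0), ← h3, hg_def]
          _ = algebraMap k[X] (RatFunc k) y.num / algebraMap k[X] (RatFunc k) y.denom := by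
              rw [haevalnum, h4]
          _ = y := RatFunc.num_div_denom y
      have htr : Transcendental k g := by
        intro halg
        have h1 : IsAlgebraic k w := by
          have := halg.inv
          rwa [hg_def, inv_inv] at this
        have hXw : (RatFunc.X : RatFunc k) = w + algebraMap k (RatFunc k) a₀ := by
          rw [hw_def, map_sub, RatFunc.algebraMap_X, hCmap]
          ring
        have h2 : IsAlgebraic k (RatFunc.X : RatFunc k) := by
          rw [hXw]
          exact ((isAlgebraic_iff_isIntegral.mp h1).add
            (isAlgebraic_iff_isIntegral.mp (isAlgebraic_algebraMap a₀))).isAlgebraic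
        exact transcendental_X h2
      exact build g hg hsub htr
  · -- the infinite place is the bad one
    have hall : ∀ a, GA a := by
      intro a
      by_contra hga
      exact fin_inf a hga hGI
    set g : RatFunc k := RatFunc.X with hg_def
    have hg : ∃ b : A, algebraMap A (RatFunc k) b = g := by
      apply mem_range_of_regular
      · intro c _
        rw [hg_def]
        show (RatFunc.X : RatFunc k).denom.eval c ≠ 0
        rw [← RatFunc.algebraMap_X, RatFunc.denom_algebraMap]
        simp
      · intro h; exact absurd h hGI
    have hsub : ∀ b : A, ∃ P : k[X], aeval g P = algebraMap A (RatFunc k) b := by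
      intro b
      set y := algebraMap A (RatFunc k) b with hy
      have hd1 : y.denom = 1 := denom_eq_one_of (fun a => hall a b)
      refine ⟨y.num, ?_⟩
      rw [hg_def, ← algMap_poly]
      conv_rhs => rw [← RatFunc.num_div_denom y]
      rw [hd1, map_one, div_one]
    exact build g hg hsub transcendental_X
end
end

section
/- Let A be an integral domain that is a finitely generated k-algebra, and let ∂ be a nonzero locally nilpotent k-derivation of A with kernel B = {a ∈ A : ∂(a) = 0}. Then there exists an element r ∈ A that is transcendental over the fraction field Frac(B) of B, such that Frac(A) is generated as a field over Frac(B) by r; that is, Frac(A) = Frac(B)(r) is purely transcendental of transcendence degree 1 over Frac(B). -/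
open Finset


lemma lnd_poly_rel_zero (k A : Type) [Field k] [CharZero k] [CommRing A] [IsDomain A]
    [Algebra k A] (der : Derivation k A A) (a s : A) (hsa : der a = s) (hs0 : s ≠ 0) :
    ∀ (n : ℕ) (b : ℕ → A), (∀ i, der (b i) = 0) →
      (∑ i ∈ Finset.range (n + 1), b i * a ^ i) = 0 → ∀ i ≤ n, b i = 0 := by
  haveI : CharZero A := charZero_of_injective_algebraMap (algebraMap k A).injective
  intro n
  induction n with
  | zero =>
    intro b hb hsum i hi
    interval_cases i
    simpa using hsum
  | succ n ih =>
    intro b hb hsum i hi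
    have hd : ∑ i ∈ range (n + 2), (i • (b i * a ^ (i - 1))) * s = 0 := by
      have := congrArg der hsum
      rw [map_sum, map_zero] at this
      rw [← this]
      apply Finset.sum_congr rfl
      intro j hj
      rw [Derivation.leibniz, Derivation.leibniz_pow, hb j, hsa]
      simp only [smul_eq_mul, mul_zero, add_zero, smul_mul_assoc, mul_smul_comm]
      ring_nf
    rw [← Finset.sum_mul] at hd
    have hd2 : ∑ i ∈ range (n + 2), i • (b i * a ^ (i - 1)) = 0 :=
      (mul_eq_zero.mp hd).resolve_right hs0
    rw [Finset.sum_range_succ'] at hd2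
    simp only [zero_smul, add_zero] at hd2
    have hd3 : ∑ i ∈ range (n + 1), ((i+1) • b (i+1)) * a ^ i = 0 := by
      rw [← hd2]
      apply Finset.sum_congr rfl
      intro j hj
      rw [smul_mul_assoc]
      congr 1
    have hkey : ∀ j ≤ n, (j+1) • b (j+1) = 0 :=
      ih (fun j => (j+1) • b (j+1)) (fun j => by rw [map_nsmul, hb, smul_zero]) hd3
    have hsucc : ∀ j ≤ n, b (j + 1) = 0 := by
      intro j hj
      have h := hkey j hj
      rw [nsmul_eq_mul] at h
      rcases mul_eq_zero.mp h with h | h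
      · exact absurd h (Nat.cast_ne_zero.mpr j.succ_ne_zero)
      · exact h
    rcases Nat.eq_zero_or_pos i with rfl | hipos
    · rw [Finset.sum_range_succ'] at hsum
      have hz : ∑ i ∈ range (n + 1), b (i + 1) * a ^ (i + 1) = 0 :=
        Finset.sum_eq_zero fun j hj =>
          by rw [hsucc j (Nat.lt_succ_iff.mp (Finset.mem_range.mp hj)), zero_mul]
      rw [hz, zero_add, pow_zero, mul_one] at hsum
      exact hsum
    · obtain ⟨j, rfl⟩ : ∃ j, i = j + 1 := ⟨i - 1, by omega⟩
      exact hsucc j (by omega)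


lemma lnd_frac_mem (k A : Type) [Field k] [CharZero k] [CommRing A] [IsDomain A]
    [Algebra k A] (der : Derivation k A A) (a s : A) (hsa : der a = s)
    (hss : der s = 0) (hs0 : s ≠ 0)
    (E : IntermediateField k (FractionRing A))
    (hmem : ∀ u : A, der u = 0 → algebraMap A (FractionRing A) u ∈ E)
    (hrmem : algebraMap A (FractionRing A) a / algebraMap A (FractionRing A) s ∈ E) :
    ∀ (n : ℕ) (x : A), (⇑der)^[n] x = 0 → algebraMap A (FractionRing A) x ∈ E := by
  haveI : CharZero A := charZero_of_injective_algebraMap (algebraMap k A).injective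
  set φ := algebraMap A (FractionRing A) with hφdef
  have hφ : Function.Injective φ := IsFractionRing.injective A (FractionRing A)
  haveI : CharZero (FractionRing A) := charZero_of_injective_algebraMap hφ
  have hφs : φ s ≠ 0 := fun h => hs0 (hφ (by rwa [map_zero]))
  have hdint : ∀ (z : ℤ) (w : A), der ((z : A) * w) = (z : A) * der w := by
    intro z w
    rw [Derivation.leibniz, Derivation.map_intCast, smul_zero, add_zero, smul_eq_mul]
  have hzero : ∀ m, (⇑der)^[m] (0 : A) = 0 := fun m => Function.iterate_fixed (map_zero der) m
  intro n
  induction n with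
  | zero =>
    intro x hx
    simp only [Function.iterate_zero, id_eq] at hx
    rw [hx, map_zero]; exact zero_mem E
  | succ n ih =>
    intro x hx
    have hiter : ∀ i : ℕ, φ ((⇑der)^[i + 1] x) ∈ E := by
      intro i
      apply ih
      have h1 : (⇑der)^[n] ((⇑der)^[i + 1] x) = (⇑der)^[i] ((⇑der)^[n + 1] x) := by
        rw [← Function.iterate_add_apply, ← Function.iterate_add_apply]
        ring_nf
      rw [h1, hx, hzero]
    set c : ℕ → ℤ := fun i => (-1) ^ i * ∏ j ∈ Finset.Ico i n, (j + 1 : ℤ) with hc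
    have hcstep : ∀ i < n, (c i : A) = -(((i : A) + 1) * (c (i + 1) : A)) := by
      intro i hi
      have : c i = -((i + 1) * c (i + 1)) := by
        simp only [hc]
        rw [Finset.prod_eq_prod_Ico_succ_bot hi]
        ring
      rw [this]
      push_cast
      ring
    have hc0 : c 0 ≠ 0 := by
      simp only [hc, pow_zero, one_mul]
      exact Finset.prod_ne_zero_iff.mpr fun j _ => by positivity
    set t : ℕ → A := fun i => (c i : A) * ((⇑der)^[i] x * (a ^ i * s ^ (n - i))) with ht
    set f : ℕ → A := fun i => (c i : A) * ((⇑der)^[i + 1] x * (a ^ i * s ^ (n - i))) with hf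
    have hdt0 : der (t 0) = f 0 := by
      simp only [ht, hf, Function.iterate_zero, id_eq, pow_zero, one_mul, Nat.sub_zero,
        zero_add, Function.iterate_one]
      rw [hdint]
      congr 1
      rw [Derivation.leibniz, Derivation.leibniz_pow, hss]
      simp only [smul_zero, smul_eq_mul, mul_zero, zero_add]
      ring
    have hdt : ∀ i < n, der (t (i + 1)) = f (i + 1) - f i := by
      intro i hi
      simp only [ht, hf]
      rw [hdint, Derivation.leibniz, Derivation.leibniz, Derivation.leibniz_pow,
        Derivation.leibniz_pow, hss, hsa]
      rw [Function.iterate_succ_apply' der (i + 1) x]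
      have hpow : s * s ^ (n - (i + 1)) = s ^ (n - i) := by
        rw [← pow_succ']
        congr 1
        omega
      rw [hcstep i hi]
      simp only [smul_zero, mul_zero, add_zero, smul_eq_mul, nsmul_eq_mul]
      push_cast
      rw [← hpow]
      ring
    set u := ∑ i ∈ range (n + 1), t i with hu
    have hderu : der u = 0 := by
      rw [hu, map_sum, Finset.sum_range_succ']
      have h1 : ∑ i ∈ range n, der (t (i + 1)) = ∑ i ∈ range n, (f (i + 1) - f i) :=
        Finset.sum_congr rfl fun i hi => hdt i (Finset.mem_range.mp hi)
      rw [h1, hdt0, Finset.sum_range_sub]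
      have hfn : f n = 0 := by
        simp only [hf]
        rw [Function.iterate_succ_apply'] at hx ⊢
        rw [hx, zero_mul, mul_zero]
      rw [hfn]
      ring
    have humem : φ u ∈ E := hmem u hderu
    have htsuccmem : ∀ i : ℕ, φ (t (i + 1)) ∈ E := by
      intro i
      simp only [ht]
      rw [map_mul, map_mul, map_mul, map_pow, map_pow, map_intCast]
      have hamem : φ a ∈ E := by
        have h2 : φ a = φ a / φ s * φ s := by field_simp
        rw [h2]
        exact mul_mem hrmem (hmem s hss)
      exact mul_mem (intCast_mem E _) (mul_mem (hiter i)
        (mul_mem (pow_mem hamem _) (pow_mem (hmem s hss) _)))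
    have ht0mem : φ (t 0) ∈ E := by
      have h3 : φ (t 0) = φ u - ∑ i ∈ range n, φ (t (i + 1)) := by
        rw [← map_sum, ← map_sub]
        congr 1
        rw [hu, Finset.sum_range_succ']
        ring
      rw [h3]
      exact sub_mem humem (sum_mem fun i _ => htsuccmem i)
    have hcK : φ ((c 0 : ℤ) : A) ≠ 0 := by
      rw [map_intCast]
      exact Int.cast_ne_zero.mpr hc0
    have hfinal : φ x = φ (t 0) * ((φ ((c 0 : ℤ) : A))⁻¹ * (φ s ^ n)⁻¹) := by
      simp only [ht, Function.iterate_zero, id_eq, pow_zero, one_mul, Nat.sub_zero]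
      rw [map_mul, map_mul, map_pow]
      have key : ∀ X C S : FractionRing A, C ≠ 0 → S ≠ 0 → X = C * (X * S) * (C⁻¹ * S⁻¹) := by
        intro X C S hC hS
        field_simp
      exact key _ _ _ hcK (pow_ne_zero n hφs)
    rw [hfinal]
    refine mul_mem ht0mem (mul_mem (inv_mem ?_) (inv_mem (pow_mem (hmem s hss) n)))
    rw [map_intCast]
    exact intCast_mem E _

/-- The case of the additive group `G_a` in Theorem 1 of the paper: if `∂` is a nonzero
locally nilpotent `k`-derivation of a finitely generated integral `k`-domain `A` with
kernel `B`, then `Frac A` is purely transcendental of transcendence degree 1 over `Frac B`: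
there is `r ∈ Frac A` transcendental over `Frac B` with `Frac A = (Frac B)(r)`.
Here `Frac B` is realized inside `Frac A` as the subfield generated over `k` by the image
of the kernel of `∂`. -/
theorem fraction_field_purely_transcendental_over_kernel_of_lnd
    (k A : Type) [Field k] [IsAlgClosed k] [CharZero k]
    [CommRing A] [IsDomain A] [Algebra k A] [Algebra.FiniteType k A]
    (der : Derivation k A A) (hne : der ≠ 0)
    (hln : ∀ a : A, ∃ N : ℕ, 0 < N ∧ (⇑der)^[N] a = 0) :
    ∃ r : FractionRing A,
      Transcendental
        (IntermediateField.adjoin k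
          (algebraMap A (FractionRing A) '' {a : A | der a = 0})) r ∧
      IntermediateField.adjoin k
        (insert r (algebraMap A (FractionRing A) '' {a : A | der a = 0})) = ⊤ := by
  classical
  set φ := algebraMap A (FractionRing A) with hφdef
  have hφ : Function.Injective φ := IsFractionRing.injective A (FractionRing A)
  haveI : CharZero A := charZero_of_injective_algebraMap (algebraMap k A).injective
  -- find a local slice a with der a = s ≠ 0, der s = 0
  obtain ⟨x0, hx0⟩ : ∃ x0 : A, der x0 ≠ 0 := by
    by_contra h
    push_neg at h
    exact hne (by ext w; simp [h w])
  obtain ⟨N, hNpos, hN⟩ := hln x0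
  have hex : ∃ m, (⇑der)^[m] x0 = 0 := ⟨N, hN⟩
  set m := Nat.find hex with hm
  have hm0 : (⇑der)^[m] x0 = 0 := Nat.find_spec hex
  have hmmin : ∀ j < m, (⇑der)^[j] x0 ≠ 0 := fun j hj => Nat.find_min hex hj
  have hm2 : 2 ≤ m := by
    rcases Nat.lt_or_ge m 2 with h | h
    · interval_cases m
      · simp only [Function.iterate_zero, id_eq] at hm0
        exact absurd (by rw [hm0, map_zero]) hx0
      · simp only [Function.iterate_one] at hm0
        exact absurd hm0 hx0
    · exact h
  set a : A := (⇑der)^[m - 2] x0 with ha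
  set s : A := der a with hsdef
  have hsa : der a = s := rfl
  have hs1 : s = (⇑der)^[m - 1] x0 := by
    rw [hsdef, ha, ← Function.iterate_succ_apply' der (m - 2) x0]
    congr 1
    omega
  have hs0 : s ≠ 0 := by
    rw [hs1]
    exact hmmin (m - 1) (by omega)
  have hss : der s = 0 := by
    rw [hs1, ← Function.iterate_succ_apply' der (m - 1) x0]
    have h5 : (m - 1).succ = m := by omega
    rw [h5, hm0]
  have hφs : φ s ≠ 0 := fun h => hs0 (hφ (by rwa [map_zero]))
  set r : FractionRing A := φ a / φ s with hrdef
  -- the kernel subalgebra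
  set Bsub : Subalgebra k A :=
    { carrier := {a : A | der a = 0}
      mul_mem' := fun {p q} hp hq => by
        simp only [Set.mem_setOf_eq] at *
        rw [Derivation.leibniz, hp, hq, smul_zero, smul_zero, add_zero]
      one_mem' := by simp only [Set.mem_setOf_eq]; exact Derivation.map_one_eq_zero der
      add_mem' := fun {p q} hp hq => by
        simp only [Set.mem_setOf_eq] at *
        rw [map_add, hp, hq, add_zero]
      zero_mem' := by simp only [Set.mem_setOf_eq, map_zero]
      algebraMap_mem' := fun c => Derivation.map_algebraMap der c } with hBsub
  -- every element of adjoin k (φ '' ker) is a ratio of images of kernel elements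
  have hratio : ∀ w : FractionRing A,
      w ∈ IntermediateField.adjoin k (φ '' {a : A | der a = 0}) →
      ∃ u v : A, der u = 0 ∧ der v = 0 ∧ v ≠ 0 ∧ w = φ u / φ v := by
    intro w hw
    have hw' : w ∈ Subfield.closure
        (Set.range (algebraMap k (FractionRing A)) ∪ φ '' {a : A | der a = 0}) := hw
    rw [Subfield.mem_closure_iff] at hw'
    obtain ⟨y, hy, z, hz, hyz⟩ := hw'
    have hsub : Subring.closure
        (Set.range (algebraMap k (FractionRing A)) ∪ φ '' {a : A | der a = 0}) ≤
        ((Bsub.map (IsScalarTower.toAlgHom k A (FractionRing A))).toSubring) := by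
      rw [Subring.closure_le]
      rintro w' (⟨c, rfl⟩ | ⟨p, hp, rfl⟩)
      · refine ⟨algebraMap k A c, Bsub.algebraMap_mem c, ?_⟩
        simp [IsScalarTower.algebraMap_apply k A (FractionRing A)]
      · exact ⟨p, hp, rfl⟩
    obtain ⟨uy, huy, rfl⟩ := hsub hy
    obtain ⟨uz, huz, rfl⟩ := hsub hz
    rcases eq_or_ne uz 0 with rfl | huz0
    · refine ⟨0, s, map_zero der, hss, hs0, ?_⟩
      rw [← hyz]
      simp
    · exact ⟨uy, uz, huy, huz, huz0, hyz.symm⟩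
  refine ⟨r, ?_, ?_⟩
  · -- r is transcendental over Frac B
    intro halg
    obtain ⟨p, hp0, hpr⟩ := halg
    set n := p.natDegree with hn
    choose u v hu hv hvne hcoef using fun i : ℕ =>
      hratio ((p.coeff i : FractionRing A)) (SetLike.coe_mem (p.coeff i))
    have he : ∑ i ∈ Finset.range (n + 1), ((p.coeff i : FractionRing A)) * r ^ i = 0 := by
      rw [← hpr, Polynomial.aeval_eq_sum_range]
      exact Finset.sum_congr rfl fun i _ => by
        rw [Algebra.smul_def, IntermediateField.algebraMap_apply]
    set b : ℕ → A := fun i =>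
      u i * (s ^ (n - i) * ∏ j ∈ (Finset.range (n + 1)).erase i, v j) with hb
    have hbker : ∀ i, der (b i) = 0 := by
      intro i
      have : b i ∈ Bsub := by
        refine mul_mem (hu i) (mul_mem (pow_mem ?_ _) (prod_mem fun j _ => hv j))
        exact hss
      exact this
    have hkey : ∀ i ∈ Finset.range (n + 1), φ (b i * a ^ i) =
        ((p.coeff i : FractionRing A)) * r ^ i *
          (φ s ^ n * φ (∏ j ∈ Finset.range (n + 1), v j)) := by
      intro i hi
      have hile : i ≤ n := Nat.lt_succ_iff.mp (Finset.mem_range.mp hi)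
      have hφv : ∀ j, φ (v j) ≠ 0 := fun j h => hvne j (hφ (by rwa [map_zero]))
      have hVsplit : φ (∏ j ∈ Finset.range (n + 1), v j) =
          φ (v i) * φ (∏ j ∈ (Finset.range (n + 1)).erase i, v j) := by
        rw [← map_mul, Finset.mul_prod_erase _ _ hi]
      rw [hcoef i, hVsplit, hrdef, hb]
      simp only
      rw [map_mul, map_mul, map_mul, map_pow, map_pow, div_pow,
        pow_sub₀ (φ s) hφs hile]
      have key2 : ∀ U V P S X : FractionRing A, V ≠ 0 → S ≠ 0 →
          U * (S ^ n / S ^ i * P) * X = U / V * (X / S ^ i) * (S ^ n * (V * P)) := by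
        intro U V P S X hV hS
        field_simp
      exact key2 _ _ _ _ _ (hφv i) hφs
    have hsum0 : φ (∑ i ∈ Finset.range (n + 1), b i * a ^ i) = 0 := by
      rw [map_sum, Finset.sum_congr rfl hkey, ← Finset.sum_mul, he, zero_mul]
    have hsumA : ∑ i ∈ Finset.range (n + 1), b i * a ^ i = 0 :=
      hφ (by rw [hsum0, map_zero])
    have hball := lnd_poly_rel_zero k A der a s hsa hs0 n b hbker hsumA
    have hcoefzero : ∀ i, p.coeff i = 0 := by
      intro i
      by_cases hi : i ≤ n
      · have hbi := hball i hi
        rw [hb] at hbi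
        simp only at hbi
        have hne2 : s ^ (n - i) * ∏ j ∈ (Finset.range (n + 1)).erase i, v j ≠ 0 :=
          mul_ne_zero (pow_ne_zero _ hs0) (Finset.prod_ne_zero_iff.mpr fun j _ => hvne j)
        have hui : u i = 0 := by
          rcases mul_eq_zero.mp hbi with h | h
          · exact h
          · exact absurd h hne2
        have : ((p.coeff i : FractionRing A)) = 0 := by
          rw [hcoef i, hui, map_zero, zero_div]
        exact_mod_cast this
      · exact p.coeff_eq_zero_of_natDegree_lt (by omega)
    exact hp0 (Polynomial.ext fun i => by rw [hcoefzero i, Polynomial.coeff_zero])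
  · -- Frac A = Frac B (r)
    rw [eq_top_iff]
    intro w _
    set E := IntermediateField.adjoin k (insert r (φ '' {a : A | der a = 0})) with hE
    have hmemE : ∀ q : A, der q = 0 → φ q ∈ E := fun q hq =>
      IntermediateField.subset_adjoin _ _ (Set.mem_insert_of_mem _ ⟨q, hq, rfl⟩)
    have hrE : φ a / φ s ∈ E := IntermediateField.subset_adjoin _ _ (Set.mem_insert _ _)
    have hAE : ∀ p : A, φ p ∈ E := by
      intro p
      obtain ⟨N', _, hN'⟩ := hln p
      exact lnd_frac_mem k A der a s hsa hss hs0 E hmemE hrE N' p hN'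
    obtain ⟨p, q, hq, rfl⟩ := IsFractionRing.div_surjective (A := A) w
    exact div_mem (hAE p) (hAE q)
end

section
/- Let ℓ ≥ 2 be an integer, Q the polynomial ring over k in the 2ℓ+1 variables x_1, …, x_ℓ, x_0, x_{−ℓ}, …, x_{−1}, h = x_0^2 + x_{−1}x_1 + ⋯ + x_{−ℓ}x_ℓ, and B = Q/(h), with x̄_i denoting the image of x_i in B. For j in J' = {2, …, ℓ, 0, −ℓ, …, −2}, let ∂_j be the k-derivation of B induced by the derivation D_j of Q (determined by D_j(x_j) = x_1; D_j(x_{−1}) = −x_{−j} for j ≠ 0 and D_0(x_{−1}) = −2x_0; D_j(x_i) = 0 otherwise), which descends to B since D_j(h) = 0. Then the family {∂_j : j ∈ J'} of 2ℓ−1 derivations of B is linearly independent over B (Σ_{j∈J'} b_j ∂_j = 0 with b_j ∈ B forces all b_j = 0), and the common kernel {b ∈ B : ∂_j(b) = 0 for all j ∈ J'} equals the k-subalgebra of B generated by x̄_1. -/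
open MvPolynomial

set_option synthInstance.maxHeartbeats 1000000

/-- The quadratic form `h = x₀² + x₋₁x₁ + x₋₂x₂ + ⋯ + x₋ₗxₗ` in the `2ℓ + 1` variables
`x₁, …, x_ℓ, x₀, x₋ℓ, …, x₋₁`; the variable `x₀` is indexed by `none`, the variable
`xᵢ₊₁` by `some (Sum.inl i)` and the variable `x₋₍ᵢ₊₁₎` by `some (Sum.inr i)`. -/
noncomputable def quadH (k : Type) [CommRing k] (l : ℕ) :
    MvPolynomial (Option (Fin l ⊕ Fin l)) k :=
  X none ^ 2 + ∑ i : Fin l, X (some (Sum.inl i)) * X (some (Sum.inr i))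

/-- For an index `j`, the unique `k`-derivation `D_j` of
`Q = k[x₁, …, x_ℓ, x₀, x₋ℓ, …, x₋₁]` with `D_j(x_j) = x₁`, with `D_j(x₋₁) = -x₋ⱼ` if
`j ≠ 0` and `D₀(x₋₁) = -2x₀`, and with `D_j(xᵢ) = 0` for every other variable. -/
noncomputable def quadDerQ (k : Type) [CommRing k] (l : ℕ) (hl : 0 < l)
    (j : Option (Fin l ⊕ Fin l)) :
    Derivation k (MvPolynomial (Option (Fin l ⊕ Fin l)) k)
      (MvPolynomial (Option (Fin l ⊕ Fin l)) k) :=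
  MvPolynomial.mkDerivation k fun i =>
    if i = j then X (some (Sum.inl (⟨0, hl⟩ : Fin l)))
    else if i = some (Sum.inr (⟨0, hl⟩ : Fin l)) then
      if j = none then -(2 : MvPolynomial (Option (Fin l ⊕ Fin l)) k) * X none
      else -X (Option.map Sum.swap j)
    else 0

/-- The index set `J' = {2, 3, …, ℓ, 0, -ℓ, …, -3, -2}`: all `2ℓ - 1` indices of
variables other than `x₁` and `x₋₁`. -/
abbrev quadIdxQ (l : ℕ) (hl : 0 < l) : Type :=
  {j : Option (Fin l ⊕ Fin l) //
    j ≠ some (Sum.inl ⟨0, hl⟩) ∧ j ≠ some (Sum.inr ⟨0, hl⟩)}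

set_option maxHeartbeats 1000000

noncomputable section AuxSplit

variable {k : Type} [Field k] {σ : Type} [DecidableEq σ]

def splitAt (v : σ) :
    MvPolynomial σ k ≃ₐ[k] Polynomial (MvPolynomial {i : σ // i ≠ v} k) :=
  (renameEquiv k (Equiv.optionSubtypeNe v).symm).trans (optionEquivLeft k _)

lemma splitAt_X_self (v : σ) : splitAt (k := k) v (X v) = Polynomial.X := by
  simp [splitAt, Equiv.optionSubtypeNe_symm_self, optionEquivLeft_X_none]

lemma splitAt_X_ne (v : σ) {i : σ} (h : i ≠ v) :
    splitAt (k := k) v (X i) = Polynomial.C (X ⟨i, h⟩) := by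
  simp [splitAt, Equiv.optionSubtypeNe_symm_of_ne h, optionEquivLeft_X_some]

def psiAt (v : σ) : MvPolynomial {i : σ // i ≠ v} k →ₐ[k] MvPolynomial σ k :=
  ((splitAt (k := k) v).symm.toAlgHom.comp Polynomial.CAlgHom)

lemma psiAt_apply (v : σ) (a : MvPolynomial {i : σ // i ≠ v} k) :
    psiAt v a = (splitAt (k := k) v).symm (Polynomial.C a) := rfl

lemma splitAt_psiAt (v : σ) (a : MvPolynomial {i : σ // i ≠ v} k) :
    splitAt (k := k) v (psiAt v a) = Polynomial.C a := by
  rw [psiAt_apply, AlgEquiv.apply_symm_apply]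

lemma psiAt_X (v : σ) (w : {i : σ // i ≠ v}) : psiAt (k := k) v (X w) = X w.1 := by
  apply (splitAt (k := k) v).injective
  rw [splitAt_psiAt, splitAt_X_ne v w.2]

lemma psiAt_injective (v : σ) : Function.Injective (psiAt (k := k) v) := by
  intro a b hab
  have := congrArg (splitAt (k := k) v) hab
  rw [splitAt_psiAt, splitAt_psiAt] at this
  exact Polynomial.C_injective this

lemma psiAt_C {k : Type} [Field k] {σ : Type} [DecidableEq σ] (v : σ) (c : k) :
    psiAt (k := k) v (C c) = C c := by
  rw [← MvPolynomial.algebraMap_eq, AlgHom.commutes, MvPolynomial.algebraMap_eq]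

end AuxSplit

noncomputable section QuadSetup

variable {k : Type} [Field k] [CharZero k] {l : ℕ}

/-- companion index functions for the part of `h` away from `x₋₁` -/
def uFun (hl : 0 < l) (i : Fin l) :
    {x : Option (Fin l ⊕ Fin l) // x ≠ some (Sum.inr ⟨0, hl⟩)} :=
  if hi : i = ⟨0, hl⟩ then ⟨none, by simp⟩ else ⟨some (Sum.inr i), by simp [hi]⟩

/-- the constant coefficient of `h` as a polynomial in `x₋₁` -/
def a0Em1 (k : Type) [Field k] (hl : 0 < l) :
    MvPolynomial {x : Option (Fin l ⊕ Fin l) // x ≠ some (Sum.inr ⟨0, hl⟩)} k :=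
  X ⟨none, by simp⟩ ^ 2 +
    ∑ i ∈ Finset.univ.erase (⟨0, hl⟩ : Fin l),
      X ⟨some (Sum.inl i), by simp⟩ * X (uFun hl i)

lemma splitAt_quadH (hl : 0 < l) :
    splitAt (k := k) (some (Sum.inr ⟨0, hl⟩)) (quadH k l)
      = Polynomial.C (X ⟨some (Sum.inl ⟨0, hl⟩), by simp⟩) * Polynomial.X
        + Polynomial.C (a0Em1 k hl) := by
  have hsum : (∑ i ∈ Finset.univ.erase (⟨0, hl⟩ : Fin l),
        splitAt (k := k) (some (Sum.inr ⟨0, hl⟩))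
          (X (some (Sum.inl i)) * X (some (Sum.inr i))))
      = Polynomial.C (∑ i ∈ Finset.univ.erase (⟨0, hl⟩ : Fin l),
          X (⟨some (Sum.inl i), by simp⟩ :
            {x : Option (Fin l ⊕ Fin l) // x ≠ some (Sum.inr ⟨0, hl⟩)}) * X (uFun hl i)) := by
    rw [map_sum]
    refine Finset.sum_congr rfl fun i hi => ?_
    have hi0 : i ≠ ⟨0, hl⟩ := Finset.ne_of_mem_erase hi
    rw [map_mul, splitAt_X_ne _ (by simp), splitAt_X_ne _ (by simp [hi0]),
      ← Polynomial.C_mul, uFun, dif_neg hi0]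
  rw [quadH, map_add, map_pow,
    splitAt_X_ne _ (show (none : Option (Fin l ⊕ Fin l)) ≠ some (Sum.inr ⟨0, hl⟩) by simp),
    map_sum, ← Finset.add_sum_erase _ _ (Finset.mem_univ (⟨0, hl⟩ : Fin l)), hsum,
    map_mul, splitAt_X_ne _ (show (some (Sum.inl ⟨0,hl⟩) : Option (Fin l ⊕ Fin l)) ≠ some (Sum.inr ⟨0,hl⟩) by simp),
    splitAt_X_self, a0Em1, Polynomial.C_add, Polynomial.C_pow]
  ring

lemma a0Em1_ne_zero (hl : 0 < l) : (a0Em1 k hl) ≠ 0 := by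
  intro h0
  have h1 := congrArg
    (aeval (fun w : {x : Option (Fin l ⊕ Fin l) // x ≠ some (Sum.inr ⟨0, hl⟩)} =>
      if w.1 = none then (1 : k) else 0)) h0
  rw [map_zero, a0Em1, map_add, map_pow, map_sum, aeval_X, if_pos rfl,
    Finset.sum_eq_zero (fun i hi => by rw [map_mul, aeval_X]; simp)] at h1
  simpa using h1

lemma eq_zero_of_psiAt_mem_span (hl : 0 < l)
    (c : MvPolynomial {x : Option (Fin l ⊕ Fin l) // x ≠ some (Sum.inr ⟨0, hl⟩)} k)
    (hc : psiAt (k := k) (some (Sum.inr ⟨0, hl⟩)) c ∈ Ideal.span {quadH k l}) : c = 0 := by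
  obtain ⟨u, hu⟩ := Ideal.mem_span_singleton.mp hc
  have h1 := congrArg (splitAt (k := k) (some (Sum.inr ⟨0, hl⟩))) hu
  rw [splitAt_psiAt, map_mul, splitAt_quadH hl] at h1
  by_cases hU : splitAt (k := k) (some (Sum.inr ⟨0, hl⟩)) u = 0
  · rw [hU, mul_zero] at h1
    exact Polynomial.C_eq_zero.mp h1
  · exfalso
    have hlin_deg : (Polynomial.C
        (X (⟨some (Sum.inl ⟨0, hl⟩), by simp⟩ :
          {x : Option (Fin l ⊕ Fin l) // x ≠ some (Sum.inr (⟨0, hl⟩ : Fin l))})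
          : MvPolynomial _ k) * Polynomial.X
        + Polynomial.C (a0Em1 k hl)).natDegree = 1 :=
      Polynomial.natDegree_linear (X_ne_zero _)
    have hlin_ne : (Polynomial.C
        (X (⟨some (Sum.inl ⟨0, hl⟩), by simp⟩ :
          {x : Option (Fin l ⊕ Fin l) // x ≠ some (Sum.inr (⟨0, hl⟩ : Fin l))})
          : MvPolynomial _ k) * Polynomial.X
        + Polynomial.C (a0Em1 k hl)) ≠ 0 := fun hz => by
      rw [hz] at hlin_deg; simp at hlin_deg
    have h2 := congrArg Polynomial.natDegree h1
    rw [Polynomial.natDegree_C, Polynomial.natDegree_mul hlin_ne hU, hlin_deg] at h2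
    omega

lemma nzd_em1 (hl : 0 < l) (p : MvPolynomial (Option (Fin l ⊕ Fin l)) k)
    (hp : p * X (some (Sum.inr ⟨0, hl⟩)) ∈ Ideal.span {quadH k l}) :
    p ∈ Ideal.span {quadH k l} := by
  obtain ⟨u, hu⟩ := Ideal.mem_span_singleton.mp hp
  have h1 := congrArg (splitAt (k := k) (some (Sum.inr ⟨0, hl⟩))) hu
  rw [map_mul, map_mul, splitAt_X_self, splitAt_quadH hl] at h1
  have hdvd : Polynomial.X ∣ (Polynomial.C
        (X (⟨some (Sum.inl ⟨0, hl⟩), by simp⟩ :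
          {x : Option (Fin l ⊕ Fin l) // x ≠ some (Sum.inr ⟨0, hl⟩)})
          : MvPolynomial _ k) * Polynomial.X
        + Polynomial.C (a0Em1 k hl)) * splitAt (k := k) (some (Sum.inr ⟨0, hl⟩)) u :=
    ⟨splitAt (k := k) (some (Sum.inr ⟨0, hl⟩)) p, by rw [← h1]; ring⟩
  have hX_not : ¬ (Polynomial.X ∣ (Polynomial.C
        (X (⟨some (Sum.inl ⟨0, hl⟩), by simp⟩ :
          {x : Option (Fin l ⊕ Fin l) // x ≠ some (Sum.inr ⟨0, hl⟩)})
          : MvPolynomial _ k) * Polynomial.X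
        + Polynomial.C (a0Em1 k hl))) := by
    rw [Polynomial.X_dvd_iff]
    simp [Polynomial.coeff_C_mul, a0Em1_ne_zero hl]
  rcases (Polynomial.prime_X.2.2 _ _ hdvd) with h | h
  · exact absurd h hX_not
  · obtain ⟨u', hu'⟩ := h
    have h3 : splitAt (k := k) (some (Sum.inr ⟨0, hl⟩)) p
        = (Polynomial.C
        (X (⟨some (Sum.inl ⟨0, hl⟩), by simp⟩ :
          {x : Option (Fin l ⊕ Fin l) // x ≠ some (Sum.inr ⟨0, hl⟩)})
          : MvPolynomial _ k) * Polynomial.X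
        + Polynomial.C (a0Em1 k hl)) * u' :=
      mul_right_cancel₀ Polynomial.X_ne_zero (by rw [h1, hu']; ring)
    refine Ideal.mem_span_singleton.mpr
      ⟨(splitAt (k := k) (some (Sum.inr ⟨0, hl⟩))).symm u', ?_⟩
    apply (splitAt (k := k) (some (Sum.inr ⟨0, hl⟩))).injective
    rw [map_mul, AlgEquiv.apply_symm_apply, splitAt_quadH hl, h3]

def swapV (l : ℕ) : Option (Fin l ⊕ Fin l) → Option (Fin l ⊕ Fin l) := Option.map Sum.swap

lemma swapV_swapV (p : MvPolynomial (Option (Fin l ⊕ Fin l)) k) :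
    rename (swapV l) (rename (swapV l) p) = p := by
  rw [rename_rename]
  have : (swapV l) ∘ (swapV l) = id := funext fun x => by cases x <;> simp [swapV]
  rw [this, rename_id, AlgHom.id_apply]

lemma rename_swapV_quadH : rename (swapV l) (quadH k l) = quadH k l := by
  rw [quadH, map_add, map_pow, rename_X, map_sum]
  have h0 : swapV l none = none := rfl
  rw [h0]
  congr 1
  refine Finset.sum_congr rfl fun i _ => ?_
  rw [map_mul, rename_X, rename_X]
  have h1 : swapV l (some (Sum.inl i)) = some (Sum.inr i) := rfl
  have h2 : swapV l (some (Sum.inr i)) = some (Sum.inl i) := rfl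
  rw [h1, h2, mul_comm]

lemma nzd_e1 (hl : 0 < l) (p : MvPolynomial (Option (Fin l ⊕ Fin l)) k)
    (hp : p * X (some (Sum.inl ⟨0, hl⟩)) ∈ Ideal.span {quadH k l}) :
    p ∈ Ideal.span {quadH k l} := by
  have h1 : rename (swapV l) p * X (some (Sum.inr ⟨0, hl⟩)) ∈ Ideal.span {quadH k l} := by
    obtain ⟨u, hu⟩ := Ideal.mem_span_singleton.mp hp
    refine Ideal.mem_span_singleton.mpr ⟨rename (swapV l) u, ?_⟩
    have h2 := congrArg (rename (swapV l)) hu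
    rw [map_mul, map_mul, rename_X, rename_swapV_quadH] at h2
    exact h2
  have h2 := nzd_em1 hl _ h1
  obtain ⟨u, hu⟩ := Ideal.mem_span_singleton.mp h2
  refine Ideal.mem_span_singleton.mpr ⟨rename (swapV l) u, ?_⟩
  have h3 := congrArg (rename (swapV l)) hu
  rw [map_mul, rename_swapV_quadH, swapV_swapV] at h3
  exact h3

end QuadSetup

section Reduce

variable {A : Type} [CommRing A] [IsDomain A]

/-- Division with remainder by a linear polynomial after multiplying by a power
of the leading coefficient. -/
lemma reduce_linear (a₁ a₀ : A) (P : Polynomial A) :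
    ∃ (N : ℕ) (q : Polynomial A) (c : A),
      Polynomial.C a₁ ^ N * P = (Polynomial.C a₁ * Polynomial.X + Polynomial.C a₀) * q + Polynomial.C c := by
  generalize hn : P.natDegree = n
  induction n using Nat.strong_induction_on generalizing P with
  | _ n ih =>
    rcases Nat.eq_zero_or_pos n with h0 | hpos
    · subst h0
      obtain ⟨c, hc⟩ := Polynomial.natDegree_eq_zero.mp hn
      exact ⟨0, 0, c, by simp [← hc]⟩
    · have hP0 : P.coeff 0 = P.coeff 0 := rfl
      set P'' : Polynomial A := -(Polynomial.C a₀ * P.divX) + Polynomial.C (a₁ * P.coeff 0) with hP''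
      have key : Polynomial.C a₁ * P = (Polynomial.C a₁ * Polynomial.X + Polynomial.C a₀) * P.divX + P'' := by
        conv_lhs => rw [← Polynomial.X_mul_divX_add P]
        rw [hP'', Polynomial.C_mul]; ring
      have hdeg : P''.natDegree < n := by
        have h1 : (Polynomial.C a₀ * P.divX).natDegree ≤ P.divX.natDegree := Polynomial.natDegree_C_mul_le _ _
        have h2 : P.divX.natDegree ≤ n - 1 := by
          rw [Polynomial.natDegree_divX_eq_natDegree_tsub_one, hn]
        calc P''.natDegree ≤ max (-(Polynomial.C a₀ * P.divX)).natDegree (Polynomial.C (a₁ * P.coeff 0)).natDegree :=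
              Polynomial.natDegree_add_le _ _
          _ ≤ n - 1 := by
              rw [Polynomial.natDegree_neg, Polynomial.natDegree_C]
              simpa using h1.trans h2
          _ < n := by omega
      obtain ⟨N, q, c, hq⟩ := ih P''.natDegree hdeg P'' rfl
      refine ⟨N + 1, Polynomial.C a₁ ^ N * P.divX + q, c, ?_⟩
      calc Polynomial.C a₁ ^ (N + 1) * P = Polynomial.C a₁ ^ N * (Polynomial.C a₁ * P) := by ring
        _ = Polynomial.C a₁ ^ N * ((Polynomial.C a₁ * Polynomial.X + Polynomial.C a₀) * P.divX + P'') := by rw [key]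
        _ = (Polynomial.C a₁ * Polynomial.X + Polynomial.C a₀) * (Polynomial.C a₁ ^ N * P.divX) + (Polynomial.C a₁ ^ N * P'') := by ring
        _ = (Polynomial.C a₁ * Polynomial.X + Polynomial.C a₀) * (Polynomial.C a₁ ^ N * P.divX + q) + Polynomial.C c := by rw [hq]; ring

end Reduce

section CharZeroPDeriv

variable {k : Type} [Field k] [CharZero k] {σ : Type} [DecidableEq σ]

lemma coeff_pderiv (w : σ) (s : σ →₀ ℕ) (a : MvPolynomial σ k) :
    coeff s (pderiv w a) = ((s w : k) + 1) * coeff (s + Finsupp.single w 1) a := by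
  induction a using MvPolynomial.induction_on' with
  | monomial u c =>
    rw [pderiv_monomial, coeff_monomial, coeff_monomial]
    by_cases hu : u = s + Finsupp.single w 1
    · subst hu
      rw [if_pos (by simp), if_pos rfl]
      simp [Finsupp.add_apply, Finsupp.single_eq_same, mul_comm]
    · rw [if_neg hu]
      by_cases hus : u - Finsupp.single w 1 = s
      · rw [if_pos hus]
        have huw : u w = 0 := by
          by_contra huw
          exact hu (by
            rw [← hus, tsub_add_cancel_of_le
              (Finsupp.single_le_iff.mpr (Nat.one_le_iff_ne_zero.mpr huw))])
        simp [huw]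
      · rw [if_neg hus, mul_zero]
  | add p q hp hq =>
    rw [map_add, coeff_add, coeff_add, hp, hq]; ring

lemma coeff_eq_zero_of_pderiv_eq_zero {a : MvPolynomial σ k} {w : σ}
    (h : pderiv w a = 0) {m : σ →₀ ℕ} (hm : m w ≠ 0) : coeff m a = 0 := by
  have h0 : coeff (m - Finsupp.single w 1) (pderiv w a) = 0 := by rw [h]; rfl
  rw [_root_.coeff_pderiv, tsub_add_cancel_of_le
    (Finsupp.single_le_iff.mpr (Nat.one_le_iff_ne_zero.mpr hm))] at h0
  rcases mul_eq_zero.mp h0 with h1 | h1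
  · exact absurd h1 (Nat.cast_add_one_ne_zero _)
  · exact h1

lemma mem_adjoin_of_pderiv_eq_zero (w1 : σ) (a : MvPolynomial σ k)
    (h : ∀ w, w ≠ w1 → pderiv w a = 0) :
    a ∈ Algebra.adjoin k {(X w1 : MvPolynomial σ k)} := by
  have hs : a ∈ supported k ({w1} : Set σ) := by
    rw [mem_supported]
    intro w hw
    obtain ⟨d, hd, hwd⟩ := (mem_vars w).mp hw
    by_contra hww1
    exact (MvPolynomial.mem_support_iff.mp hd)
      (coeff_eq_zero_of_pderiv_eq_zero (h w hww1) (Finsupp.mem_support_iff.mp hwd))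
  have : supported k ({w1} : Set σ) = Algebra.adjoin k {(X w1 : MvPolynomial σ k)} := by
    show Algebra.adjoin k (X '' {w1}) = _
    rw [Set.image_singleton]
  rwa [this] at hs

end CharZeroPDeriv

noncomputable section QuadMore

variable {k : Type} [Field k] [CharZero k] {l : ℕ}

lemma exists_reduction (hl : 0 < l) (p : MvPolynomial (Option (Fin l ⊕ Fin l)) k) :
    ∃ (N : ℕ) (q : MvPolynomial (Option (Fin l ⊕ Fin l)) k)
      (c : MvPolynomial {x : Option (Fin l ⊕ Fin l) // x ≠ some (Sum.inr ⟨0, hl⟩)} k),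
      X (some (Sum.inl ⟨0, hl⟩)) ^ N * p
        = quadH k l * q + psiAt (some (Sum.inr ⟨0, hl⟩)) c := by
  obtain ⟨N, q, c, hq⟩ := reduce_linear
    (X (⟨some (Sum.inl ⟨0, hl⟩), by simp⟩ :
      {x : Option (Fin l ⊕ Fin l) // x ≠ some (Sum.inr ⟨0, hl⟩)}))
    (a0Em1 k hl) (splitAt (k := k) (some (Sum.inr ⟨0, hl⟩)) p)
  refine ⟨N, (splitAt (k := k) (some (Sum.inr ⟨0, hl⟩))).symm q, c, ?_⟩
  apply (splitAt (k := k) (some (Sum.inr ⟨0, hl⟩))).injective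
  rw [map_add, map_mul, map_mul, map_pow,
    splitAt_X_ne _ (show (some (Sum.inl ⟨0, hl⟩) : Option (Fin l ⊕ Fin l))
      ≠ some (Sum.inr ⟨0, hl⟩) by simp),
    splitAt_quadH hl, AlgEquiv.apply_symm_apply, splitAt_psiAt]
  exact hq

lemma quadDerQ_psiAt (hl : 0 < l)
    (w : {x : Option (Fin l ⊕ Fin l) // x ≠ some (Sum.inr ⟨0, hl⟩)})
    (c : MvPolynomial {x : Option (Fin l ⊕ Fin l) // x ≠ some (Sum.inr ⟨0, hl⟩)} k) :
    quadDerQ k l hl w.1 (psiAt (some (Sum.inr ⟨0, hl⟩)) c)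
      = X (some (Sum.inl ⟨0, hl⟩)) * psiAt (some (Sum.inr ⟨0, hl⟩)) (pderiv w c) := by
  induction c using MvPolynomial.induction_on with
  | C a =>
    rw [pderiv_C, map_zero, mul_zero, psiAt_C, ← MvPolynomial.algebraMap_eq,
      Derivation.map_algebraMap]
  | add p q hp hq =>
    simp only [map_add]
    rw [hp, hq, mul_add]
  | mul_X p w' hp =>
    have hXw' : quadDerQ k l hl w.1 (X w'.1)
        = if w' = w then X (some (Sum.inl ⟨0, hl⟩)) else 0 := by
      rw [quadDerQ, mkDerivation_X]
      by_cases hww : w' = w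
      · rw [if_pos (congrArg Subtype.val hww), if_pos hww]
      · rw [if_neg (fun hh => hww (Subtype.ext hh)), if_neg w'.2, if_neg hww]
    by_cases hww : w' = w
    · rw [map_mul, psiAt_X, Derivation.leibniz, smul_eq_mul, smul_eq_mul, hp, hXw',
        if_pos hww, pderiv_mul, hww, pderiv_X_self, mul_one, map_add, map_mul, psiAt_X]
      ring
    · rw [map_mul, psiAt_X, Derivation.leibniz, smul_eq_mul, smul_eq_mul, hp, hXw',
        if_neg hww]
      simp only [pderiv_mul, pderiv_X_of_ne hww, mul_zero, add_zero, map_mul, psiAt_X]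
      ring

end QuadMore

noncomputable section QuadB

variable {k : Type} [Field k] [CharZero k] {l : ℕ}


lemma mk_quadH_eq_zero :
    Ideal.Quotient.mk (Ideal.span {quadH k l}) (quadH k l) = 0 :=
  Ideal.Quotient.eq_zero_iff_mem.mpr (Ideal.mem_span_singleton_self _)

lemma quadDerQ_X_e1 (hl : 0 < l) (j : quadIdxQ l hl) :
    quadDerQ k l hl j.1 (X (some (Sum.inl ⟨0, hl⟩))) = 0 := by
  rw [quadDerQ, mkDerivation_X, if_neg (fun hh => j.2.1 hh.symm), if_neg (by simp)]

lemma quadDerQ_X_idx (hl : 0 < l) (j j0 : quadIdxQ l hl) :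
    quadDerQ k l hl j.1 (X j0.1)
      = if j0 = j then X (some (Sum.inl ⟨0, hl⟩)) else 0 := by
  rw [quadDerQ, mkDerivation_X]
  by_cases h : j0 = j
  · rw [if_pos (congrArg Subtype.val h), if_pos h]
  · rw [if_neg (fun hh => h (Subtype.ext hh)), if_neg (fun hh => j0.2.2 hh), if_neg h]

lemma nzdB (hl : 0 < l) (c : MvPolynomial (Option (Fin l ⊕ Fin l)) k ⧸ Ideal.span {quadH k l})
    (hc : Ideal.Quotient.mk (Ideal.span {quadH k l}) (X (some (Sum.inl ⟨0, hl⟩))) * c = 0) :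
    c = 0 := by
  obtain ⟨pc, rfl⟩ := Ideal.Quotient.mk_surjective c
  rw [← map_mul, Ideal.Quotient.eq_zero_iff_mem] at hc
  rw [Ideal.Quotient.eq_zero_iff_mem]
  exact nzd_e1 hl pc (by rwa [mul_comm] at hc)

omit [CharZero k] in
lemma aeval0_vanish : ∀ a ∈ Ideal.span {quadH k l},
    (aeval (fun _ : Option (Fin l ⊕ Fin l) => (0 : k))) a = 0 := by
  intro a ha
  obtain ⟨u, hu⟩ := Ideal.mem_span_singleton.mp ha
  have hq0 : aeval (fun _ : Option (Fin l ⊕ Fin l) => (0 : k)) (quadH k l) = 0 := by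
    rw [quadH]; simp
  rw [hu, map_mul, hq0, zero_mul]

omit [CharZero k] in
def epsB' :
    (MvPolynomial (Option (Fin l ⊕ Fin l)) k ⧸ Ideal.span {quadH k l}) →+* k :=
  Ideal.Quotient.lift (Ideal.span {quadH k l})
    ((aeval (fun _ : Option (Fin l ⊕ Fin l) => (0 : k))
      : MvPolynomial (Option (Fin l ⊕ Fin l)) k →ₐ[k] k).toRingHom)
    (fun a ha => aeval0_vanish a ha)

omit [CharZero k] in
lemma epsB_mk (a : MvPolynomial (Option (Fin l ⊕ Fin l)) k) :
    epsB' (k := k) (l := l) (Ideal.Quotient.mk (Ideal.span {quadH k l}) a)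
      = aeval (fun _ : Option (Fin l ⊕ Fin l) => (0 : k)) a :=
  Ideal.Quotient.lift_mk _ _ _

omit [CharZero k] in
lemma epsB_algebraMap (c0 : k) : epsB' (k := k) (l := l) (algebraMap k _ c0) = c0 := by
  have h6 : (algebraMap k (MvPolynomial (Option (Fin l ⊕ Fin l)) k
        ⧸ Ideal.span {quadH k l}) c0)
      = Ideal.Quotient.mk (Ideal.span {quadH k l}) (MvPolynomial.C c0) := rfl
  rw [h6, epsB_mk]; simp

lemma divide_step (hl : 0 < l)
    (d : MvPolynomial (Option (Fin l ⊕ Fin l)) k ⧸ Ideal.span {quadH k l})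
    (hd : Ideal.Quotient.mk (Ideal.span {quadH k l}) (X (some (Sum.inl ⟨0, hl⟩))) * d
      ∈ Algebra.adjoin k
        {Ideal.Quotient.mk (Ideal.span {quadH k l}) (X (some (Sum.inl ⟨0, hl⟩)))}) :
    d ∈ Algebra.adjoin k
      {Ideal.Quotient.mk (Ideal.span {quadH k l}) (X (some (Sum.inl ⟨0, hl⟩)))} := by
  rw [Algebra.adjoin_singleton_eq_range_aeval] at hd
  obtain ⟨f, hf0⟩ := hd
  have hf : (Polynomial.aeval (Ideal.Quotient.mk (Ideal.span {quadH k l})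
      (X (some (Sum.inl ⟨0, hl⟩))))) f
      = Ideal.Quotient.mk (Ideal.span {quadH k l}) (X (some (Sum.inl ⟨0, hl⟩))) * d := hf0
  have hsplit : (Polynomial.aeval (Ideal.Quotient.mk (Ideal.span {quadH k l})
        (X (some (Sum.inl ⟨0, hl⟩))))) f
      = Ideal.Quotient.mk (Ideal.span {quadH k l}) (X (some (Sum.inl ⟨0, hl⟩)))
          * Polynomial.aeval (Ideal.Quotient.mk (Ideal.span {quadH k l})
            (X (some (Sum.inl ⟨0, hl⟩)))) f.divX
        + algebraMap k _ (f.coeff 0) := by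
    conv_lhs => rw [← Polynomial.X_mul_divX_add f]
    rw [map_add, map_mul, Polynomial.aeval_X, Polynomial.aeval_C]
  have heq : Ideal.Quotient.mk (Ideal.span {quadH k l}) (X (some (Sum.inl ⟨0, hl⟩)))
        * (d - Polynomial.aeval (Ideal.Quotient.mk (Ideal.span {quadH k l})
          (X (some (Sum.inl ⟨0, hl⟩)))) f.divX)
      = algebraMap k _ (f.coeff 0) := by
    rw [mul_sub, ← hf, hsplit]; ring
  have hc00 : f.coeff 0 = 0 := by
    have h7 := congrArg (epsB' (k := k) (l := l)) heq
    rw [map_mul, epsB_mk, epsB_algebraMap] at h7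
    simpa using h7.symm
  rw [hc00, map_zero] at heq
  have hb0 := sub_eq_zero.mp (nzdB hl _ heq)
  rw [hb0, Algebra.adjoin_singleton_eq_range_aeval]
  exact ⟨f.divX, rfl⟩

lemma divide_pow (hl : 0 < l) (M : ℕ)
    (d : MvPolynomial (Option (Fin l ⊕ Fin l)) k ⧸ Ideal.span {quadH k l})
    (hd : Ideal.Quotient.mk (Ideal.span {quadH k l}) (X (some (Sum.inl ⟨0, hl⟩))) ^ M * d
      ∈ Algebra.adjoin k
        {Ideal.Quotient.mk (Ideal.span {quadH k l}) (X (some (Sum.inl ⟨0, hl⟩)))}) :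
    d ∈ Algebra.adjoin k
      {Ideal.Quotient.mk (Ideal.span {quadH k l}) (X (some (Sum.inl ⟨0, hl⟩)))} := by
  induction M generalizing d with
  | zero => simpa using hd
  | succ n ih =>
    apply divide_step hl
    apply ih
    rw [← mul_assoc, ← pow_succ]
    exact hd

lemma psiAt_mem_adjoin (hl : 0 < l)
    (c : MvPolynomial {x : Option (Fin l ⊕ Fin l) // x ≠ some (Sum.inr ⟨0, hl⟩)} k)
    (hc : c ∈ Algebra.adjoin k
      {X (⟨some (Sum.inl ⟨0, hl⟩), by simp⟩ :
        {x : Option (Fin l ⊕ Fin l) // x ≠ some (Sum.inr ⟨0, hl⟩)})}) :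
    psiAt (some (Sum.inr ⟨0, hl⟩)) c
      ∈ Algebra.adjoin k
        {(X (some (Sum.inl ⟨0, hl⟩)) : MvPolynomial (Option (Fin l ⊕ Fin l)) k)} := by
  have h4 : psiAt (k := k) ((some (Sum.inr ⟨0, hl⟩)) : Option (Fin l ⊕ Fin l)) c
      ∈ (Algebra.adjoin k
          {X (⟨some (Sum.inl ⟨0, hl⟩), by simp⟩ :
            {x : Option (Fin l ⊕ Fin l) // x ≠ some (Sum.inr ⟨0, hl⟩)})}).map
        (psiAt (k := k) ((some (Sum.inr ⟨0, hl⟩)) : Option (Fin l ⊕ Fin l))) :=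
    Subalgebra.mem_map.mpr ⟨c, hc, rfl⟩
  rwa [AlgHom.map_adjoin, Set.image_singleton, psiAt_X] at h4

lemma mk_mem_adjoin (hl : 0 < l) (p0 : MvPolynomial (Option (Fin l ⊕ Fin l)) k)
    (hp0 : p0 ∈ Algebra.adjoin k
      {(X (some (Sum.inl ⟨0, hl⟩)) : MvPolynomial (Option (Fin l ⊕ Fin l)) k)}) :
    Ideal.Quotient.mk (Ideal.span {quadH k l}) p0
      ∈ Algebra.adjoin k
        {Ideal.Quotient.mk (Ideal.span {quadH k l}) (X (some (Sum.inl ⟨0, hl⟩)))} := by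
  have h5 : Ideal.Quotient.mkₐ k (Ideal.span {quadH k l}) p0
      ∈ (Algebra.adjoin k
          {(X (some (Sum.inl ⟨0, hl⟩)) : MvPolynomial (Option (Fin l ⊕ Fin l)) k)}).map
        (Ideal.Quotient.mkₐ k (Ideal.span {quadH k l})) :=
    Subalgebra.mem_map.mpr ⟨p0, hp0, rfl⟩
  rwa [AlgHom.map_adjoin, Set.image_singleton] at h5

lemma kernel_main (hl : 0 < l) (p : MvPolynomial (Option (Fin l ⊕ Fin l)) k)
    (hDh : ∀ j : quadIdxQ l hl, quadDerQ k l hl j.1 (quadH k l) ∈ Ideal.span {quadH k l})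
    (hDp : ∀ j : quadIdxQ l hl, quadDerQ k l hl j.1 p ∈ Ideal.span {quadH k l}) :
    Ideal.Quotient.mk (Ideal.span {quadH k l}) p
      ∈ Algebra.adjoin k
        {Ideal.Quotient.mk (Ideal.span {quadH k l}) (X (some (Sum.inl ⟨0, hl⟩)))} := by
  obtain ⟨N, q, c, hred⟩ := exists_reduction (k := k) hl p
  have hc0 : ∀ w : {x : Option (Fin l ⊕ Fin l) // x ≠ some (Sum.inr ⟨0, hl⟩)},
      w ≠ ⟨some (Sum.inl ⟨0, hl⟩), by simp⟩ → pderiv w c = 0 := by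
    intro w hw
    have hj1 : w.1 ≠ some (Sum.inl ⟨0, hl⟩) := fun h => hw (Subtype.ext h)
    have h1 : quadDerQ k l hl w.1 (psiAt (some (Sum.inr ⟨0, hl⟩)) c)
        ∈ Ideal.span {quadH k l} := by
      have e : psiAt (some (Sum.inr ⟨0, hl⟩)) c
          = X (some (Sum.inl ⟨0, hl⟩)) ^ N * p - quadH k l * q := by
        rw [hred]; ring
      rw [e, map_sub]
      refine Ideal.sub_mem _ ?_ ?_
      · rw [Derivation.leibniz, smul_eq_mul, smul_eq_mul, Derivation.leibniz_pow,
          quadDerQ_X_e1 hl ⟨w.1, hj1, w.2⟩, smul_zero, smul_zero, mul_zero, add_zero]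
        exact Ideal.mul_mem_left _ _ (hDp ⟨w.1, hj1, w.2⟩)
      · rw [Derivation.leibniz, smul_eq_mul, smul_eq_mul]
        exact Ideal.add_mem _
          (Ideal.mul_mem_right _ _ (Ideal.mem_span_singleton_self _))
          (Ideal.mul_mem_left _ _ (hDh ⟨w.1, hj1, w.2⟩))
    rw [quadDerQ_psiAt hl w c] at h1
    have h2 := nzd_e1 hl (psiAt (some (Sum.inr ⟨0, hl⟩)) (pderiv w c))
      (by rwa [mul_comm] at h1)
    exact eq_zero_of_psiAt_mem_span hl _ h2
  have hcadj := mem_adjoin_of_pderiv_eq_zero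
    (⟨some (Sum.inl ⟨0, hl⟩), by simp⟩ :
      {x : Option (Fin l ⊕ Fin l) // x ≠ some (Sum.inr ⟨0, hl⟩)}) c hc0
  have hmk := mk_mem_adjoin hl _ (psiAt_mem_adjoin hl c hcadj)
  apply divide_pow hl N
  rw [← map_pow, ← map_mul, hred, map_add, map_mul, mk_quadH_eq_zero, zero_mul, zero_add]
  exact hmk

end QuadB

lemma derivation_sum_apply {R A : Type} [CommRing R] [CommRing A] [Algebra R A]
    {ι : Type} [Fintype ι] [DecidableEq ι] (D : ι → Derivation R A A) (b : ι → A) (x : A) :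
    (∑ j, b j • D j) x = ∑ j, b j * (D j) x := by
  have key : ∀ s : Finset ι, (∑ j ∈ s, b j • D j) x = ∑ j ∈ s, b j * (D j) x := by
    intro s
    induction s using Finset.induction_on with
    | empty => simp
    | insert a s ha ih =>
      rw [Finset.sum_insert ha, Finset.sum_insert ha, Derivation.add_apply,
        Derivation.smul_apply, smul_eq_mul, ih]
  exact key Finset.univ


/-- For `ℓ ≥ 2`, let `∂_j` (`j ∈ J'`) be the `k`-derivations of `B = Q/(h)` induced by
the derivations `D_j` of `Q = k[x₁, …, x_ℓ, x₀, x₋ℓ, …, x₋₁]` (which descend since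
`D_j(h) = 0`).  Then the family `{∂_j : j ∈ J'}` of `2ℓ - 1` derivations of `B` is
linearly independent over `B`, and its common kernel is exactly the `k`-subalgebra of `B`
generated by `x̄₁`, the image of the variable `x₁`. -/
theorem odd_quadric_induced_derivations_linIndep_and_kernel
    (k : Type) [Field k] [IsAlgClosed k] [CharZero k] (l : ℕ) (hl : 2 ≤ l) :
    ∀ der : quadIdxQ l (by omega) →
        Derivation k (MvPolynomial (Option (Fin l ⊕ Fin l)) k ⧸ Ideal.span {quadH k l})
          (MvPolynomial (Option (Fin l ⊕ Fin l)) k ⧸ Ideal.span {quadH k l}),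
      (∀ (j : quadIdxQ l (by omega)) (p : MvPolynomial (Option (Fin l ⊕ Fin l)) k),
        der j (Ideal.Quotient.mk (Ideal.span {quadH k l}) p)
          = Ideal.Quotient.mk (Ideal.span {quadH k l}) (quadDerQ k l (by omega) j.1 p)) →
      (∀ b : quadIdxQ l (by omega) →
          (MvPolynomial (Option (Fin l ⊕ Fin l)) k ⧸ Ideal.span {quadH k l}),
        (∑ j, b j • der j) = 0 → ∀ j, b j = 0) ∧
      {b : MvPolynomial (Option (Fin l ⊕ Fin l)) k ⧸ Ideal.span {quadH k l} |
          ∀ j : quadIdxQ l (by omega), der j b = 0}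
        = ↑(Algebra.adjoin k
            {Ideal.Quotient.mk (Ideal.span {quadH k l})
              (X (some (Sum.inl ⟨0, by omega⟩)))}) := by
  intro der hder
  have hl0 : 0 < l := by omega
  classical
  have hDh : ∀ j : quadIdxQ l hl0,
      quadDerQ k l hl0 j.1 (quadH k l) ∈ Ideal.span {quadH k l} := by
    intro j
    have h1 := hder j (quadH k l)
    rw [mk_quadH_eq_zero, map_zero] at h1
    exact Ideal.Quotient.eq_zero_iff_mem.mp h1.symm
  constructor
  · intro b hsum j0
    have hval : ∀ j : quadIdxQ l hl0,
        der j (Ideal.Quotient.mk (Ideal.span {quadH k l}) (X j0.1))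
          = if j0 = j then
              Ideal.Quotient.mk (Ideal.span {quadH k l}) (X (some (Sum.inl ⟨0, hl0⟩)))
            else 0 := by
      intro j
      rw [hder j (X j0.1), quadDerQ_X_idx hl0 j j0]
      by_cases h : j0 = j
      · rw [if_pos h, if_pos h]
      · rw [if_neg h, if_neg h, map_zero]
    have happ := DFunLike.congr_fun hsum
      (Ideal.Quotient.mk (Ideal.span {quadH k l}) (X j0.1))
    rw [derivation_sum_apply, Derivation.zero_apply] at happ
    have hsum2 : (∑ j : quadIdxQ l hl0,
          b j * der j (Ideal.Quotient.mk (Ideal.span {quadH k l}) (X j0.1)))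
        = ∑ j : quadIdxQ l hl0, b j * (if j0 = j then
            Ideal.Quotient.mk (Ideal.span {quadH k l}) (X (some (Sum.inl ⟨0, hl0⟩)))
          else 0) :=
      Finset.sum_congr rfl (fun j _ => by rw [hval j])
    rw [hsum2] at happ
    simp only [mul_ite, mul_zero] at happ
    rw [Finset.sum_ite_eq, if_pos (Finset.mem_univ j0)] at happ
    exact nzdB hl0 (b j0) (by rwa [mul_comm] at happ)
  · ext b
    simp only [Set.mem_setOf_eq, SetLike.mem_coe]
    constructor
    · intro hb
      obtain ⟨p, rfl⟩ := Ideal.Quotient.mk_surjective b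
      have hDp : ∀ j : quadIdxQ l hl0,
          quadDerQ k l hl0 j.1 p ∈ Ideal.span {quadH k l} := by
        intro j
        apply Ideal.Quotient.eq_zero_iff_mem.mp
        rw [← hder j p]
        exact hb j
      exact kernel_main hl0 p hDh hDp
    · intro hb j
      have hderX : der j (Ideal.Quotient.mk (Ideal.span {quadH k l})
          (X (some (Sum.inl ⟨0, hl0⟩)))) = 0 := by
        rw [hder j, quadDerQ_X_e1 hl0 j, map_zero]
      rw [Algebra.adjoin_singleton_eq_range_aeval] at hb
      obtain ⟨f, hf0⟩ := hb
      have hf : (Polynomial.aeval (Ideal.Quotient.mk (Ideal.span {quadH k l})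
          (X (some (Sum.inl ⟨0, hl0⟩))))) f = b := hf0
      rw [← hf]
      clear hf hf0
      induction f using Polynomial.induction_on with
      | C a =>
        rw [Polynomial.aeval_C]
        exact Derivation.map_algebraMap _ _
      | add p q hp hq =>
        rw [map_add, map_add, hp, hq, add_zero]
      | monomial n a ih =>
        rw [map_mul, Polynomial.aeval_C, map_pow, Polynomial.aeval_X, Derivation.leibniz,
          Derivation.leibniz_pow, hderX]
        simp
end
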